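/- arXiv:math/9809121 — 5 statements merged into one kernel-verified Lean document; each statement's English description precedes it below -/
import Mathlib

section
/- If M and N are finitely generated modules over a commutative Noetherian ring R given by two projective presentations of the same module M, then the Auslander duals computed from the two presentations are projectively equivalent; i.e., if P1 → P0 → M → 0 and Q1 → Q0 → M → 0 are projective presentations with induced maps u and v, then Coker(u*) ⊕ P ≅ Coker(v*) ⊕ Q for some finitely generated projective modules P, Q. -/
open CategoryTheory

universe u

variable (R : Type u) [CommRing R]

/-- The `i`-th Ext module of two modules, as an object of `ModuleCat R`. -/
noncomputable def extM (M N : ModuleCat.{u} R) (i : ℕ) : ModuleCat.{u} R :=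
  ((Ext R (ModuleCat.{u} R) i).obj (Opposite.op M)).obj N

/-- `D` is an Auslander dual of `M`: `D ≅ Coker(u* : P0* → P1*)` for some finite projective
presentation `P1 →u P0 → M → 0`. -/
def IsAuslanderDual (M D : ModuleCat.{u} R) : Prop :=
  ∃ (P1 P0 : ModuleCat.{u} R) (uu : P1 →ₗ[R] P0) (f : P0 →ₗ[R] M),
    Module.Finite R P1 ∧ Module.Projective R P1 ∧
    Module.Finite R P0 ∧ Module.Projective R P0 ∧
    Function.Surjective f ∧ Function.Exact uu f ∧
    Nonempty (D ≃ₗ[R] (Module.Dual R P1 ⧸ LinearMap.range uu.dualMap))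

/-- Gorenstein dimension zero: reflexive with all positive Ext of `M` and `M*` into `R`
vanishing. -/
def GdimZero (M : ModuleCat.{u} R) : Prop :=
  Module.IsReflexive R M ∧ ∀ i : ℕ, 1 ≤ i →
    Subsingleton (extM R M (ModuleCat.of R R) i) ∧
    Subsingleton (extM R (ModuleCat.of R (Module.Dual R M)) (ModuleCat.of R R) i)

/-- `GdimLE R k M` : the Gorenstein dimension of `M` is at most `k`. -/
def GdimLE : ℕ → ModuleCat.{u} R → Prop
  | 0, M => GdimZero R M
  | (k+1), M => ∃ (N : ModuleCat.{u} R) (f : N →ₗ[R] M),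
      Function.Surjective f ∧ GdimZero R N ∧
      GdimLE k (ModuleCat.of R (LinearMap.ker f))

/-- The Gorenstein dimension, as an extended natural number. -/
noncomputable def gdim (M : ModuleCat.{u} R) : ℕ∞ :=
  sInf {n : ℕ∞ | ∃ k : ℕ, n = k ∧ GdimLE R k M}

/-- `PdLE R k M` : projective dimension at most `k` (via finite projective resolutions). -/
def PdLE : ℕ → ModuleCat.{u} R → Prop
  | 0, M => Module.Projective R M
  | (k+1), M => ∃ (P : ModuleCat.{u} R) (f : P →ₗ[R] M),
      Module.Finite R P ∧ Module.Projective R P ∧ Function.Surjective f ∧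
      PdLE k (ModuleCat.of R (LinearMap.ker f))

noncomputable def pd (M : ModuleCat.{u} R) : ℕ∞ :=
  sInf {n : ℕ∞ | ∃ k : ℕ, n = k ∧ PdLE R k M}

/-- `M` is a `k`-th syzygy: there is an exact sequence `0 → M → P₀ → ⋯ → P_{k-1}` with all
`P_j` finitely generated projective. -/
def IsSyzygy : ℕ → ModuleCat.{u} R → Prop
  | 0, _ => True
  | (k+1), M => ∃ (P : ModuleCat.{u} R) (f : M →ₗ[R] P),
      Module.Finite R P ∧ Module.Projective R P ∧ Function.Injective f ∧
      IsSyzygy k (ModuleCat.of R (P ⧸ LinearMap.range f))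

/-- `M` is `k`-torsionless: `Ext^i(D(M), R) = 0` for `1 ≤ i ≤ k`. -/
def Torsionless (k : ℕ) (M : ModuleCat.{u} R) : Prop :=
  ∃ D : ModuleCat.{u} R, IsAuslanderDual R M D ∧
    ∀ i : ℕ, 1 ≤ i → i ≤ k → Subsingleton (extM R D (ModuleCat.of R R) i)

/-- The depth of a module over a local ring, via vanishing of `Ext^i(k, M)`. -/
noncomputable def rdepth (A : Type u) [CommRing A] [IsLocalRing A] (N : ModuleCat.{u} A) : ℕ∞ :=
  sInf {n : ℕ∞ | ∃ i : ℕ, n = i ∧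
    ¬ Subsingleton (extM A (ModuleCat.of A (IsLocalRing.ResidueField A)) N i)}

/-- Injective dimension at most `k`. -/
def IdLE : ℕ → ModuleCat.{u} R → Prop
  | 0, M => Module.Injective R M
  | (k+1), M => ∃ (I : ModuleCat.{u} R) (f : M →ₗ[R] I),
      Module.Injective R I ∧ Function.Injective f ∧
      IdLE k (ModuleCat.of R (I ⧸ LinearMap.range f))



section AuslanderAux

open Module LinearMap

variable {R' : Type u} [CommRing R']
variable {N₁ N₂ N₃ N₄ N₅ : Type u}
  [AddCommGroup N₁] [Module R' N₁] [AddCommGroup N₂] [Module R' N₂]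
  [AddCommGroup N₃] [Module R' N₃] [AddCommGroup N₄] [Module R' N₄]
  [AddCommGroup N₅] [Module R' N₅]

lemma myMapEquivEq (e : N₁ ≃ₗ[R'] N₂) (p : Submodule R' N₁) :
    p.map (e : N₁ →ₗ[R'] N₂) = p.map e.toLinearMap := rfl

lemma myRangeProdMap (f : N₁ →ₗ[R'] N₂) (g : N₃ →ₗ[R'] N₄) :
    LinearMap.range (f.prodMap g) = (LinearMap.range f).prod (LinearMap.range g) := by
  ext ⟨x, y⟩
  simp only [LinearMap.mem_range, Submodule.mem_prod, LinearMap.prodMap_apply, Prod.mk.injEq]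
  exact ⟨fun ⟨c, h1, h2⟩ => ⟨⟨c.1, h1⟩, ⟨c.2, h2⟩⟩, fun ⟨⟨a, ha⟩, ⟨b, hb⟩⟩ => ⟨(a, b), ha, hb⟩⟩

noncomputable def myQuotProdEquiv (p : Submodule R' N₁) (q : Submodule R' N₂) :
    ((N₁ × N₂) ⧸ p.prod q) ≃ₗ[R'] (N₁ ⧸ p) × (N₂ ⧸ q) :=
  (Submodule.quotEquivOfEq _ _ (by
      rw [LinearMap.ker_prodMap, Submodule.ker_mkQ, Submodule.ker_mkQ])).trans
    ((p.mkQ.prodMap q.mkQ).quotKerEquivOfSurjective (fun z => by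
      obtain ⟨x, hx⟩ := p.mkQ_surjective z.1
      obtain ⟨y, hy⟩ := q.mkQ_surjective z.2
      exact ⟨(x, y), by simp [hx, hy]⟩))

lemma myMixEquiv (f : N₁ →ₗ[R'] N₅) (g : N₂ →ₗ[R'] N₅) (h : N₁ →ₗ[R'] N₂) (k : N₂ →ₗ[R'] N₁)
    (hh : g ∘ₗ h = f) (hk : f ∘ₗ k = g) :
    ∃ α : (N₁ × N₂) ≃ₗ[R'] N₁ × N₂,
      (g ∘ₗ LinearMap.snd R' N₁ N₂) ∘ₗ (α : (N₁ × N₂) →ₗ[R'] N₁ × N₂)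
        = f ∘ₗ LinearMap.fst R' N₁ N₂ := by
  let e2 : (N₁ × N₂) ≃ₗ[R'] N₁ × N₂ := LinearEquiv.ofLinear
    (LinearMap.prod (LinearMap.fst R' N₁ N₂ - k ∘ₗ LinearMap.snd R' N₁ N₂)
      (LinearMap.snd R' N₁ N₂))
    (LinearMap.prod (LinearMap.fst R' N₁ N₂ + k ∘ₗ LinearMap.snd R' N₁ N₂)
      (LinearMap.snd R' N₁ N₂))
    (by apply LinearMap.ext; rintro ⟨p, q⟩; simp)
    (by apply LinearMap.ext; rintro ⟨p, q⟩; simp)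
  let e1 : (N₁ × N₂) ≃ₗ[R'] N₁ × N₂ := LinearEquiv.ofLinear
    (LinearMap.prod (LinearMap.fst R' N₁ N₂)
      (h ∘ₗ LinearMap.fst R' N₁ N₂ + LinearMap.snd R' N₁ N₂))
    (LinearMap.prod (LinearMap.fst R' N₁ N₂)
      (LinearMap.snd R' N₁ N₂ - h ∘ₗ LinearMap.fst R' N₁ N₂))
    (by apply LinearMap.ext; rintro ⟨p, q⟩; simp)
    (by apply LinearMap.ext; rintro ⟨p, q⟩; simp)
  refine ⟨e2.trans e1, ?_⟩
  apply LinearMap.ext; rintro ⟨p, q⟩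
  have h1 := LinearMap.congr_fun hh (p - k q)
  have h2 := LinearMap.congr_fun hk q
  simp only [LinearMap.comp_apply] at h1 h2
  simp only [LinearMap.comp_apply, LinearEquiv.coe_coe, LinearEquiv.trans_apply,
    LinearEquiv.ofLinear_apply, LinearMap.prod_apply, Function.prod, LinearMap.sub_apply,
    LinearMap.add_apply, LinearMap.fst_apply, LinearMap.snd_apply, e1, e2]
  rw [map_add, h1, map_sub, h2]
  abel

lemma myDualFstComp (w : N₁ →ₗ[R'] N₃) :
    (w ∘ₗ LinearMap.fst R' N₁ N₂).dualMap
      = (Module.dualProdDualEquivDual R' N₁ N₂).toLinearMap ∘ₗ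
          (LinearMap.inl R' (Module.Dual R' N₁) (Module.Dual R' N₂)) ∘ₗ w.dualMap := by
  refine LinearMap.ext fun φ => LinearMap.ext fun x => ?_
  simp [Module.dualProdDualEquivDual_apply]

lemma myDualSndComp (w : N₁ →ₗ[R'] N₃) :
    (w ∘ₗ LinearMap.snd R' N₂ N₁).dualMap
      = (Module.dualProdDualEquivDual R' N₂ N₁).toLinearMap ∘ₗ
          (LinearMap.inr R' (Module.Dual R' N₂) (Module.Dual R' N₁)) ∘ₗ w.dualMap := by
  refine LinearMap.ext fun φ => LinearMap.ext fun x => ?_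
  simp [Module.dualProdDualEquivDual_apply]

noncomputable def myCokerDualFstStep1 (w : N₁ →ₗ[R'] N₃) :
    ((Module.Dual R' N₁ × Module.Dual R' N₂) ⧸
        ((LinearMap.range w.dualMap).prod (⊥ : Submodule R' (Module.Dual R' N₂)))) ≃ₗ[R']
      (Module.Dual R' (N₁ × N₂) ⧸ LinearMap.range (w ∘ₗ LinearMap.fst R' N₁ N₂).dualMap) :=
  Submodule.Quotient.equiv _ _ (Module.dualProdDualEquivDual R' N₁ N₂) (by
    rw [myMapEquivEq, myDualFstComp (N₂ := N₂) w, LinearMap.range_comp,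
      LinearMap.range_comp, Submodule.map_inl])

noncomputable def myCokerDualFstStep2 (w : N₁ →ₗ[R'] N₃) :
    ((Module.Dual R' N₁ × Module.Dual R' N₂) ⧸
        ((LinearMap.range w.dualMap).prod (⊥ : Submodule R' (Module.Dual R' N₂)))) ≃ₗ[R']
      (Module.Dual R' N₁ ⧸ LinearMap.range w.dualMap) × Module.Dual R' N₂ :=
  (myQuotProdEquiv _ _).trans
    (LinearEquiv.prodCongr (LinearEquiv.refl R' _) (Submodule.quotEquivOfEqBot _ rfl))

noncomputable def myCokerDualFst (w : N₁ →ₗ[R'] N₃) :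
    (Module.Dual R' (N₁ × N₂) ⧸ LinearMap.range (w ∘ₗ LinearMap.fst R' N₁ N₂).dualMap) ≃ₗ[R']
      (Module.Dual R' N₁ ⧸ LinearMap.range w.dualMap) × Module.Dual R' N₂ :=
  (myCokerDualFstStep1 w).symm.trans (myCokerDualFstStep2 w)

noncomputable def myCokerDualSndStep1 (w : N₁ →ₗ[R'] N₃) :
    ((Module.Dual R' N₂ × Module.Dual R' N₁) ⧸
        ((⊥ : Submodule R' (Module.Dual R' N₂)).prod (LinearMap.range w.dualMap))) ≃ₗ[R']
      (Module.Dual R' (N₂ × N₁) ⧸ LinearMap.range (w ∘ₗ LinearMap.snd R' N₂ N₁).dualMap) :=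
  Submodule.Quotient.equiv _ _ (Module.dualProdDualEquivDual R' N₂ N₁) (by
    rw [myMapEquivEq, myDualSndComp (N₂ := N₂) w, LinearMap.range_comp,
      LinearMap.range_comp, Submodule.map_inr])

noncomputable def myCokerDualSndStep2 (w : N₁ →ₗ[R'] N₃) :
    ((Module.Dual R' N₂ × Module.Dual R' N₁) ⧸
        ((⊥ : Submodule R' (Module.Dual R' N₂)).prod (LinearMap.range w.dualMap))) ≃ₗ[R']
      Module.Dual R' N₂ × (Module.Dual R' N₁ ⧸ LinearMap.range w.dualMap) :=
  (myQuotProdEquiv _ _).trans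
    (LinearEquiv.prodCongr (Submodule.quotEquivOfEqBot _ rfl) (LinearEquiv.refl R' _))

noncomputable def myCokerDualSnd (w : N₁ →ₗ[R'] N₃) :
    (Module.Dual R' (N₂ × N₁) ⧸ LinearMap.range (w ∘ₗ LinearMap.snd R' N₂ N₁).dualMap) ≃ₗ[R']
      Module.Dual R' N₂ × (Module.Dual R' N₁ ⧸ LinearMap.range w.dualMap) :=
  (myCokerDualSndStep1 w).symm.trans (myCokerDualSndStep2 w)

lemma myDualProdMapComp (w : N₁ →ₗ[R'] N₃) (w' : N₂ →ₗ[R'] N₄) :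
    (w.prodMap w').dualMap ∘ₗ (Module.dualProdDualEquivDual R' N₃ N₄).toLinearMap
      = (Module.dualProdDualEquivDual R' N₁ N₂).toLinearMap ∘ₗ
          (w.dualMap.prodMap w'.dualMap) := by
  refine LinearMap.ext fun φ => LinearMap.ext fun x => ?_
  simp [Module.dualProdDualEquivDual_apply]

noncomputable def myCokerDualProdMapStep1 (w : N₁ →ₗ[R'] N₃) (w' : N₂ →ₗ[R'] N₄) :
    ((Module.Dual R' N₁ × Module.Dual R' N₂) ⧸
        ((LinearMap.range w.dualMap).prod (LinearMap.range w'.dualMap))) ≃ₗ[R']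
      (Module.Dual R' (N₁ × N₂) ⧸ LinearMap.range (w.prodMap w').dualMap) :=
  Submodule.Quotient.equiv _ _ (Module.dualProdDualEquivDual R' N₁ N₂) (by
    have htop : LinearMap.range (Module.dualProdDualEquivDual R' N₃ N₄).toLinearMap = ⊤ :=
      LinearMap.range_eq_top.mpr (Module.dualProdDualEquivDual R' N₃ N₄).surjective
    rw [myMapEquivEq, ← myRangeProdMap, ← LinearMap.range_comp, ← myDualProdMapComp,
      LinearMap.range_comp_of_range_eq_top _ htop])

noncomputable def myCokerDualProdMap (w : N₁ →ₗ[R'] N₃) (w' : N₂ →ₗ[R'] N₄) :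
    (Module.Dual R' (N₁ × N₂) ⧸ LinearMap.range (w.prodMap w').dualMap) ≃ₗ[R']
      (Module.Dual R' N₁ ⧸ LinearMap.range w.dualMap) ×
        (Module.Dual R' N₂ ⧸ LinearMap.range w'.dualMap) :=
  (myCokerDualProdMapStep1 w w').symm.trans (myQuotProdEquiv _ _)

end AuslanderAux

/-- Uniqueness of the Auslander dual up to projective equivalence. -/
theorem auslander_dual_unique_up_to_projective_equivalence
    (R : Type u) [CommRing R] [IsNoetherianRing R]
    (M P1 P0 Q1 Q0 : ModuleCat.{u} R) [Module.Finite R M]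
    [Module.Finite R P1] [Module.Finite R P0] [Module.Finite R Q1] [Module.Finite R Q0]
    (hP1 : Module.Projective R P1) (hP0 : Module.Projective R P0)
    (hQ1 : Module.Projective R Q1) (hQ0 : Module.Projective R Q0)
    (u1 : P1 →ₗ[R] P0) (f : P0 →ₗ[R] M) (v1 : Q1 →ₗ[R] Q0) (g : Q0 →ₗ[R] M)
    (hf : Function.Surjective f) (huf : Function.Exact u1 f)
    (hg : Function.Surjective g) (hvg : Function.Exact v1 g) :
    ∃ (P Q : ModuleCat.{u} R), Module.Finite R P ∧ Module.Projective R P ∧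
      Module.Finite R Q ∧ Module.Projective R Q ∧
      Nonempty ((((Module.Dual R P1) ⧸ LinearMap.range u1.dualMap) × P) ≃ₗ[R]
        (((Module.Dual R Q1) ⧸ LinearMap.range v1.dualMap) × Q)) := by
  haveI := hP1; haveI := hP0; haveI := hQ1; haveI := hQ0
  -- the two product presentations of `M`
  let m : (↥P1 × ↥Q0) →ₗ[R] (↥P0 × ↥Q0) := u1.prodMap LinearMap.id
  let n : (↥P0 × ↥Q1) →ₗ[R] (↥P0 × ↥Q0) := LinearMap.id.prodMap v1
  let F : (↥P0 × ↥Q0) →ₗ[R] ↥M := f ∘ₗ LinearMap.fst R ↥P0 ↥Q0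
  let G : (↥P0 × ↥Q0) →ₗ[R] ↥M := g ∘ₗ LinearMap.snd R ↥P0 ↥Q0
  have hkerf : LinearMap.ker f = LinearMap.range u1 := huf.linearMap_ker_eq
  have hkerg : LinearMap.ker g = LinearMap.range v1 := hvg.linearMap_ker_eq
  have hkerF : LinearMap.ker F = LinearMap.range m := by
    ext x
    obtain ⟨p, q⟩ := x
    simp only [F, m, LinearMap.mem_ker, LinearMap.comp_apply, LinearMap.fst_apply]
    constructor
    · intro hp
      obtain ⟨y, hy⟩ : p ∈ LinearMap.range u1 := by rw [← hkerf]; exact hp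
      exact ⟨(y, q), by simp [LinearMap.prodMap_apply, hy]⟩
    · rintro ⟨⟨y1, y2⟩, hy⟩
      simp only [LinearMap.prodMap_apply, LinearMap.id_coe, id_eq, Prod.mk.injEq] at hy
      obtain ⟨h1, h2⟩ := hy
      have hmem : u1 y1 ∈ LinearMap.ker f := by rw [hkerf]; exact ⟨y1, rfl⟩
      rw [← h1]; exact hmem
  have hkerG : LinearMap.ker G = LinearMap.range n := by
    ext x
    obtain ⟨p, q⟩ := x
    simp only [G, n, LinearMap.mem_ker, LinearMap.comp_apply, LinearMap.snd_apply]
    constructor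
    · intro hq
      obtain ⟨y, hy⟩ : q ∈ LinearMap.range v1 := by rw [← hkerg]; exact hq
      exact ⟨(p, y), by simp [LinearMap.prodMap_apply, hy]⟩
    · rintro ⟨⟨y1, y2⟩, hy⟩
      simp only [LinearMap.prodMap_apply, LinearMap.id_coe, id_eq, Prod.mk.injEq] at hy
      obtain ⟨h1, h2⟩ := hy
      have hmem : v1 y2 ∈ LinearMap.ker g := by rw [hkerg]; exact ⟨y2, rfl⟩
      rw [← h2]; exact hmem
  -- compare the two surjections `F` and `G`
  obtain ⟨h0, hh0⟩ := Module.projective_lifting_property g f hg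
  obtain ⟨k0, hk0⟩ := Module.projective_lifting_property f g hf
  obtain ⟨α, hα⟩ := myMixEquiv f g h0 k0 hh0 hk0
  let a : (↥P1 × ↥Q0) →ₗ[R] (↥P0 × ↥Q0) := (α : (↥P0 × ↥Q0) →ₗ[R] ↥P0 × ↥Q0) ∘ₗ m
  have hrange_a : LinearMap.range a = LinearMap.ker G := by
    have h1 : LinearMap.ker F
        = Submodule.comap (α : (↥P0 × ↥Q0) →ₗ[R] ↥P0 × ↥Q0) (LinearMap.ker G) := by
      rw [← LinearMap.ker_comp]
      show LinearMap.ker F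
        = LinearMap.ker ((g ∘ₗ LinearMap.snd R ↥P0 ↥Q0) ∘ₗ (α : (↥P0 × ↥Q0) →ₗ[R] ↥P0 × ↥Q0))
      rw [hα]
    rw [LinearMap.range_comp, ← hkerF, h1]
    exact Submodule.map_comap_eq_of_surjective
      (show Function.Surjective ⇑((α : (↥P0 × ↥Q0) →ₗ[R] ↥P0 × ↥Q0)) from α.surjective) _
  have hrange_eq : LinearMap.range a = LinearMap.range n := by rw [hrange_a, hkerG]
  -- compare the two presentations of `ker G`
  obtain ⟨s, hs⟩ := Module.projective_lifting_property n.rangeRestrict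
      (a.codRestrict (LinearMap.range n) (fun x => hrange_eq ▸ LinearMap.mem_range_self a x))
      n.surjective_rangeRestrict
  have hns : n ∘ₗ s = a := by
    apply LinearMap.ext; intro x
    exact congrArg Subtype.val (LinearMap.congr_fun hs x)
  obtain ⟨t, ht⟩ := Module.projective_lifting_property a.rangeRestrict
      (n.codRestrict (LinearMap.range a) (fun x => hrange_eq.symm ▸ LinearMap.mem_range_self n x))
      a.surjective_rangeRestrict
  have hat : a ∘ₗ t = n := by
    apply LinearMap.ext; intro x
    exact congrArg Subtype.val (LinearMap.congr_fun ht x)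
  obtain ⟨β, hβ⟩ := myMixEquiv a n s t hns hat
  -- equality of dual ranges coming from `α`
  have hdual1 : LinearMap.range (a ∘ₗ LinearMap.fst R (↥P1 × ↥Q0) (↥P0 × ↥Q1)).dualMap
      = LinearMap.range (m ∘ₗ LinearMap.fst R (↥P1 × ↥Q0) (↥P0 × ↥Q1)).dualMap := by
    have hcomp : a ∘ₗ LinearMap.fst R (↥P1 × ↥Q0) (↥P0 × ↥Q1)
        = (α : (↥P0 × ↥Q0) →ₗ[R] ↥P0 × ↥Q0)
            ∘ₗ (m ∘ₗ LinearMap.fst R (↥P1 × ↥Q0) (↥P0 × ↥Q1)) := by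
      apply LinearMap.ext; intro x; rfl
    have htop : LinearMap.range ((α : (↥P0 × ↥Q0) →ₗ[R] ↥P0 × ↥Q0).dualMap) = ⊤ := by
      rw [LinearMap.range_eq_top]
      intro φ
      refine ⟨φ ∘ₗ (α.symm : (↥P0 × ↥Q0) →ₗ[R] ↥P0 × ↥Q0), ?_⟩
      apply LinearMap.ext; intro x
      simp
    rw [hcomp, ← LinearMap.dualMap_comp_dualMap, LinearMap.range_comp_of_range_eq_top _ htop]
  -- equality of dual ranges coming from `β`
  have hdual2 : Submodule.map β.dualMap.toLinearMap
        (LinearMap.range (n ∘ₗ LinearMap.snd R (↥P1 × ↥Q0) (↥P0 × ↥Q1)).dualMap)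
      = LinearMap.range (a ∘ₗ LinearMap.fst R (↥P1 × ↥Q0) (↥P0 × ↥Q1)).dualMap := by
    have hc : (β.dualMap).toLinearMap
          ∘ₗ (n ∘ₗ LinearMap.snd R (↥P1 × ↥Q0) (↥P0 × ↥Q1)).dualMap
        = (a ∘ₗ LinearMap.fst R (↥P1 × ↥Q0) (↥P0 × ↥Q1)).dualMap := by
      show ((β : ((↥P1 × ↥Q0) × (↥P0 × ↥Q1)) →ₗ[R] (↥P1 × ↥Q0) × (↥P0 × ↥Q1)).dualMap)
          ∘ₗ (n ∘ₗ LinearMap.snd R (↥P1 × ↥Q0) (↥P0 × ↥Q1)).dualMap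
        = (a ∘ₗ LinearMap.fst R (↥P1 × ↥Q0) (↥P0 × ↥Q1)).dualMap
      rw [LinearMap.dualMap_comp_dualMap, hβ]
    rw [myMapEquivEq, ← LinearMap.range_comp, hc]
  -- assemble all the isomorphisms
  have e5 := Submodule.Quotient.equiv _ _ β.dualMap hdual2
  have e6 := Submodule.quotEquivOfEq _ _ hdual1
  have eA := myCokerDualFst (N₂ := ↥P0 × ↥Q1) m
  have eB := myCokerDualSnd (N₂ := ↥P1 × ↥Q0) n
  have e_m := myCokerDualProdMap u1 (LinearMap.id : ↥Q0 →ₗ[R] ↥Q0)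
  have e_n := myCokerDualProdMap (LinearMap.id : ↥P0 →ₗ[R] ↥P0) v1
  -- the trivial quotients
  haveI hXsub : Subsingleton
      (Module.Dual R ↥Q0 ⧸ LinearMap.range (LinearMap.id : ↥Q0 →ₗ[R] ↥Q0).dualMap) := by
    refine Submodule.Quotient.subsingleton_iff.mpr ?_
    rw [LinearMap.dualMap_id, LinearMap.range_id]
  haveI hYsub : Subsingleton
      (Module.Dual R ↥P0 ⧸ LinearMap.range (LinearMap.id : ↥P0 →ₗ[R] ↥P0).dualMap) := by
    refine Submodule.Quotient.subsingleton_iff.mpr ?_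
    rw [LinearMap.dualMap_id, LinearMap.range_id]
  haveI hXfin : Module.Finite R
      (Module.Dual R ↥Q0 ⧸ LinearMap.range (LinearMap.id : ↥Q0 →ₗ[R] ↥Q0).dualMap) :=
    Module.Finite.of_surjective
      (0 : R →ₗ[R] (Module.Dual R ↥Q0 ⧸ LinearMap.range (LinearMap.id : ↥Q0 →ₗ[R] ↥Q0).dualMap))
      (fun x => ⟨0, Subsingleton.elim _ _⟩)
  haveI hYfin : Module.Finite R
      (Module.Dual R ↥P0 ⧸ LinearMap.range (LinearMap.id : ↥P0 →ₗ[R] ↥P0).dualMap) :=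
    Module.Finite.of_surjective
      (0 : R →ₗ[R] (Module.Dual R ↥P0 ⧸ LinearMap.range (LinearMap.id : ↥P0 →ₗ[R] ↥P0).dualMap))
      (fun x => ⟨0, Subsingleton.elim _ _⟩)
  refine ⟨ModuleCat.of R
      ((Module.Dual R ↥Q0 ⧸ LinearMap.range (LinearMap.id : ↥Q0 →ₗ[R] ↥Q0).dualMap)
        × Module.Dual R (↥P0 × ↥Q1)),
    ModuleCat.of R
      (Module.Dual R (↥P1 × ↥Q0)
        × (Module.Dual R ↥P0 ⧸ LinearMap.range (LinearMap.id : ↥P0 →ₗ[R] ↥P0).dualMap)),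
    ?_, ?_, ?_, ?_, ?_⟩
  · exact inferInstanceAs (Module.Finite R (_ × _))
  · exact inferInstanceAs (Module.Projective R (_ × _))
  · exact inferInstanceAs (Module.Finite R (_ × _))
  · exact inferInstanceAs (Module.Projective R (_ × _))
  · refine ⟨?_⟩
    exact (((((((((LinearEquiv.prodAssoc R _ _ _).symm.trans
      (LinearEquiv.prodCongr e_m.symm (LinearEquiv.refl R _))).trans
      eA.symm).trans
      e6.symm).trans
      e5.symm).trans
      eB).trans
      (LinearEquiv.prodCongr (LinearEquiv.refl R _) e_n)).trans
      (LinearEquiv.prodAssoc R _ _ _).symm).trans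
      (LinearEquiv.prodComm R _ _))
end

section
/- For a finitely generated module M over a commutative Noetherian ring R, with Auslander dual D(M) computed from a projective presentation, there are natural isomorphisms Ker(σ_M) ≅ Ext¹_R(D(M), R) and Coker(σ_M) ≅ Ext²_R(D(M), R), where σ_M : M → M** is the natural evaluation map. -/
open CategoryTheory

universe u

variable (R : Type u) [CommRing R]

set_option linter.unusedSectionVars false

namespace ABAux

variable {R : Type u} [CommRing R]

theorem exists_comp_eq {A B C : Type u} [AddCommGroup A] [AddCommGroup B] [AddCommGroup C]
    [Module R A] [Module R B] [Module R C] (g : A →ₗ[R] B) (hg : Function.Surjective g)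
    (ψ : A →ₗ[R] C) (h : ∀ a, g a = 0 → ψ a = 0) :
    ∃ χ : B →ₗ[R] C, χ ∘ₗ g = ψ := by
  have hle : LinearMap.ker g ≤ LinearMap.ker ψ := fun a ha => h a ha
  refine ⟨(LinearMap.ker g).liftQ ψ hle ∘ₗ (g.quotKerEquivOfSurjective hg).symm.toLinearMap, ?_⟩
  ext a
  have h1 : (g.quotKerEquivOfSurjective hg) (Submodule.Quotient.mk a) = g a := by
    simp [LinearMap.quotKerEquivOfSurjective, LinearMap.quotKerEquivRange]
  have h2 : (g.quotKerEquivOfSurjective hg).symm (g a) = Submodule.Quotient.mk a := by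
    rw [← h1, LinearEquiv.symm_apply_apply]
  simp [LinearMap.comp_apply, h2]

/-- Identify the concrete homology of a short complex of modules with a given module. -/
noncomputable def homologyEquiv (S : ShortComplex (ModuleCat.{u} R)) {W : Type u}
    [AddCommGroup W] [Module R W]
    (e : LinearMap.ker S.g.hom →ₗ[R] W) (hsurj : Function.Surjective e)
    (hker : LinearMap.ker e = LinearMap.range S.moduleCatToCycles) :
    S.moduleCatLeftHomologyData.H ≃ₗ[R] W :=
  (Submodule.quotEquivOfEq _ _ hker.symm).trans (e.quotKerEquivOfSurjective hsurj)


section Res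

variable {M P1 P0 : ModuleCat.{u} R}
  [Module.Finite R P1] [Module.Finite R P0]
  [Module.Projective R P1] [Module.Projective R P0]
  (u1 : P1 →ₗ[R] P0) (f : P0 →ₗ[R] M)
  (Q : ProjectiveResolution (ModuleCat.of R (Module.Dual R M)))

/-- the augmentation of the chosen resolution of `M*`, as a linear map. -/
noncomputable def pzero : Q.complex.X 0 →ₗ[R] Module.Dual R M := (Q.π.f 0).hom

theorem pzero_surjective : Function.Surjective (pzero Q) :=
  (ModuleCat.epi_iff_surjective (Q.π.f 0)).1 inferInstance

theorem pzero_d : LinearMap.range (Q.complex.d 1 0).hom = LinearMap.ker (pzero Q) :=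
  (ShortComplex.moduleCat_exact_iff_range_eq_ker _).1 Q.exact₀

/-- the modules in the Auslander resolution of `D(M)`. -/
noncomputable def abX : ℕ → ModuleCat.{u} R
  | 0 => ModuleCat.of R (Module.Dual R P1)
  | 1 => ModuleCat.of R (Module.Dual R P0)
  | (n+2) => Q.complex.X n

/-- the differentials in the Auslander resolution of `D(M)`. -/
noncomputable def abd :
    ∀ n : ℕ, abX (M := M) (P1 := P1) (P0 := P0) Q (n+1) ⟶ abX (M := M) (P1 := P1) (P0 := P0) Q n
  | 0 => ModuleCat.ofHom u1.dualMap
  | 1 => ModuleCat.ofHom (f.dualMap ∘ₗ pzero Q)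
  | (n+2) => Q.complex.d (n+1) n

variable (hfu : f ∘ₗ u1 = 0)

/-- the Auslander resolution complex of `D(M)`. -/
noncomputable def abC : ChainComplex (ModuleCat.{u} R) ℕ :=
  ChainComplex.of (abX Q) (abd u1 f Q) (by
    rintro (_|_|n)
    · refine ModuleCat.hom_ext (LinearMap.ext fun x => LinearMap.ext fun p => ?_)
      have : f (u1 p) = 0 := by
        have := LinearMap.congr_fun hfu p
        simpa using this
      show u1.dualMap (f.dualMap (pzero Q x)) p = 0
      simp [LinearMap.dualMap_apply, this]
    · refine ModuleCat.hom_ext (LinearMap.ext fun x => ?_)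
      have h0 : (pzero Q) ((Q.complex.d 1 0) x) = 0 :=
        LinearMap.congr_fun (ModuleCat.hom_ext_iff.1 Q.complex_d_comp_π_f_zero) x
      show f.dualMap (pzero Q (Q.complex.d 1 0 x)) = 0
      rw [h0, map_zero]
    · exact Q.complex.d_comp_d _ _ _)

theorem abC_d10 : (abC u1 f Q hfu).d 1 0 = ModuleCat.ofHom u1.dualMap :=
  ChainComplex.of_d (abX Q) (abd u1 f Q) 0

theorem abC_d21 : (abC u1 f Q hfu).d 2 1 = ModuleCat.ofHom (f.dualMap ∘ₗ pzero Q) :=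
  ChainComplex.of_d (abX Q) (abd u1 f Q) 1

theorem abC_d32 (n : ℕ) : (abC u1 f Q hfu).d (n+3) (n+2) = Q.complex.d (n+1) n :=
  ChainComplex.of_d _ _ (n+2)

instance abC_projective (n : ℕ) : Projective ((abC u1 f Q hfu).X n) := by
  match n with
  | 0 =>
    show Projective (ModuleCat.of R (Module.Dual R P1))
    exact (IsProjective.iff_projective _).1 inferInstance
  | 1 =>
    show Projective (ModuleCat.of R (Module.Dual R P0))
    exact (IsProjective.iff_projective _).1 inferInstance
  | (n+2) =>
    show Projective (Q.complex.X n)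
    infer_instance

/-- the target of the Auslander resolution. -/
noncomputable abbrev abD : ModuleCat.{u} R :=
  ModuleCat.of R (Module.Dual R P1 ⧸ LinearMap.range u1.dualMap)

theorem abd10_mkQ :
    (abC u1 f Q hfu).d 1 0 ≫
      (ModuleCat.ofHom (LinearMap.range u1.dualMap).mkQ :
        (abC u1 f Q hfu).X 0 ⟶ abD u1) = 0 := by
  rw [abC_d10]
  refine ModuleCat.hom_ext (LinearMap.ext fun x => ?_)
  show (LinearMap.range u1.dualMap).mkQ (u1.dualMap x) = 0
  rw [Submodule.mkQ_apply, Submodule.Quotient.mk_eq_zero]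
  exact ⟨x, rfl⟩

/-- the augmentation map of the Auslander resolution. -/
noncomputable def abπ :
    abC u1 f Q hfu ⟶ (ChainComplex.single₀ (ModuleCat.{u} R)).obj (abD u1) :=
  (ChainComplex.toSingle₀Equiv _ _).symm
    ⟨ModuleCat.ofHom (LinearMap.range u1.dualMap).mkQ, abd10_mkQ u1 f Q hfu⟩

variable (hf : Function.Surjective f) (huf : Function.Exact u1 f)

include hf huf in
theorem dual_exact : LinearMap.ker u1.dualMap = LinearMap.range f.dualMap := by
  ext φ
  constructor
  · intro hφ
    obtain ⟨χ, hχ⟩ := exists_comp_eq f hf φ (fun a ha => by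
      obtain ⟨b, hb⟩ := (huf a).1 ha
      have : φ (u1 b) = 0 := LinearMap.congr_fun (LinearMap.mem_ker.1 hφ) b
      rw [← hb]
      exact this)
    exact ⟨χ, hχ⟩
  · rintro ⟨χ, rfl⟩
    refine LinearMap.mem_ker.2 (LinearMap.ext fun x => ?_)
    show χ (f (u1 x)) = 0
    rw [huf.apply_apply_eq_zero, map_zero]

include hf huf in
theorem abC_exactAt_succ (n : ℕ) : (abC u1 f Q hfu).ExactAt (n+1) := by
  rw [HomologicalComplex.exactAt_iff' _ (n+2) (n+1) n (by simp) (by simp),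
    ShortComplex.moduleCat_exact_iff_range_eq_ker]
  simp only [HomologicalComplex.shortComplexFunctor'_obj_f,
    HomologicalComplex.shortComplexFunctor'_obj_g]
  match n with
  | 0 =>
    rw [abC_d21, abC_d10]
    show LinearMap.range (f.dualMap ∘ₗ pzero Q) = LinearMap.ker u1.dualMap
    rw [LinearMap.range_comp, LinearMap.range_eq_top.2 (pzero_surjective Q), Submodule.map_top,
      dual_exact u1 f hf huf]
  | 1 =>
    rw [abC_d32, abC_d21]
    show LinearMap.range (Q.complex.d 1 0).hom = LinearMap.ker (f.dualMap ∘ₗ pzero Q)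
    rw [pzero_d]
    ext x
    simp only [LinearMap.mem_ker, LinearMap.comp_apply]
    constructor
    · intro h; rw [h, map_zero]
    · intro h
      exact LinearMap.dualMap_injective_of_surjective hf (by rw [h, map_zero])
  | (n+2) =>
    rw [abC_d32, abC_d32]
    have := Q.complex_exactAt_succ n
    rw [HomologicalComplex.exactAt_iff' _ (n+2) (n+1) n (by simp) (by simp),
      ShortComplex.moduleCat_exact_iff_range_eq_ker] at this
    exact this

include hf huf in
theorem abπ_quasiIso : QuasiIso (abπ u1 f Q hfu) := ⟨fun n => by
  cases n with
  | zero =>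
    rw [ChainComplex.quasiIsoAt₀_iff, ShortComplex.quasiIso_iff_of_zeros' _ rfl rfl rfl]
    refine (ShortComplex.exact_and_epi_g_iff_of_iso
      (S₂ := ShortComplex.mk ((abC u1 f Q hfu).d 1 0)
        (ModuleCat.ofHom (LinearMap.range u1.dualMap).mkQ) (abd10_mkQ u1 f Q hfu)) ?_).2 ⟨?_, ?_⟩
    · exact ShortComplex.isoMk (Iso.refl _) (Iso.refl _) (Iso.refl _)
          (by exact (Category.id_comp _).trans (Category.comp_id _).symm)
          (by exact (Category.id_comp _).trans (Category.comp_id _).symm)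
    · rw [ShortComplex.moduleCat_exact_iff_range_eq_ker]
      show LinearMap.range ((abC u1 f Q hfu).d 1 0).hom =
        LinearMap.ker (LinearMap.range u1.dualMap).mkQ
      rw [abC_d10, Submodule.ker_mkQ]
      rfl
    · rw [ModuleCat.epi_iff_surjective]
      exact Submodule.mkQ_surjective _
  | succ n =>
    rw [quasiIsoAt_iff_exactAt']
    · exact abC_exactAt_succ u1 f Q hfu hf huf n
    · apply ChainComplex.exactAt_succ_single_obj⟩

/-- the Auslander–Bridger resolution of `D(M)` as a `ProjectiveResolution`. -/
noncomputable def abRes : ProjectiveResolution (abD u1) where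
  complex := abC u1 f Q hfu
  π := abπ u1 f Q hfu
  quasiIso := abπ_quasiIso u1 f Q hfu hf huf

include hf huf in
theorem homology1 :
    Nonempty (((((abC u1 f Q hfu).linearYonedaObj R (ModuleCat.of R R)).sc' 0 1 2).moduleCatLeftHomologyData.H)
      ≃ₗ[R] LinearMap.ker (Module.Dual.eval R M)) := by
  classical
  set K := (abC u1 f Q hfu).linearYonedaObj R (ModuleCat.of R R) with hK
  set S := K.sc' 0 1 2 with hS
  let eP0 := Module.evalEquiv R P0
  let eP1 := Module.evalEquiv R P1
  -- identity identifications of the terms of `S`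
  let ρ1 : Module.Dual R (Module.Dual R P1) →ₗ[R] S.X₁ := (ModuleCat.homLinearEquiv
    (M := ModuleCat.of R (Module.Dual R P1)) (N := ModuleCat.of R R) (S := R)).symm.toLinearMap
  let ρ1inv : S.X₁ →ₗ[R] Module.Dual R (Module.Dual R P1) := (ModuleCat.homLinearEquiv
    (M := ModuleCat.of R (Module.Dual R P1)) (N := ModuleCat.of R R) (S := R)).toLinearMap
  let ρ : S.X₂ →ₗ[R] Module.Dual R (Module.Dual R P0) := (ModuleCat.homLinearEquiv
    (M := ModuleCat.of R (Module.Dual R P0)) (N := ModuleCat.of R R) (S := R)).toLinearMap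
  let ρ' : Module.Dual R (Module.Dual R P0) →ₗ[R] S.X₂ := (ModuleCat.homLinearEquiv
    (M := ModuleCat.of R (Module.Dual R P0)) (N := ModuleCat.of R R) (S := R)).symm.toLinearMap
  -- the underlying linear map `ker S.g → M`
  let F : LinearMap.ker S.g.hom →ₗ[R] M :=
    f ∘ₗ (eP0.symm : Module.Dual R (Module.Dual R P0) →ₗ[R] P0) ∘ₗ ρ ∘ₗ (LinearMap.ker S.g.hom).subtype
  have hc2 : ∀ (c : LinearMap.ker S.g.hom) (μ : Module.Dual R M),
      (ρ c.1) (f.dualMap μ) = 0 := by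
    intro c μ
    obtain ⟨q, rfl⟩ := pzero_surjective Q μ
    exact congrArg (fun g : (abC u1 f Q hfu).X 2 ⟶ ModuleCat.of R R => g.hom q)
      (show S.g.hom c.1 = 0 from c.2)
  have hFmem : ∀ c : LinearMap.ker S.g.hom, F c ∈ LinearMap.ker (Module.Dual.eval R M) := by
    intro c
    rw [LinearMap.mem_ker]
    refine LinearMap.ext fun μ => ?_
    show μ (f (eP0.symm (ρ c.1))) = 0
    rw [← LinearMap.dualMap_apply, Module.apply_evalEquiv_symm_apply]
    exact hc2 c μ
  let e1 : LinearMap.ker S.g.hom →ₗ[R] LinearMap.ker (Module.Dual.eval R M) :=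
    F.codRestrict _ hFmem
  have he1surj : Function.Surjective e1 := by
    rintro ⟨m, hm⟩
    obtain ⟨x, rfl⟩ := hf m
    rw [LinearMap.mem_ker] at hm
    have hmem : ρ' (eP0 x) ∈ LinearMap.ker S.g.hom := by
      rw [LinearMap.mem_ker]
      refine ModuleCat.hom_ext (LinearMap.ext fun q => ?_)
      show (eP0 x) (f.dualMap (pzero Q q)) = 0
      rw [Module.evalEquiv_apply, Module.Dual.eval_apply, LinearMap.dualMap_apply]
      exact LinearMap.congr_fun hm (pzero Q q)
    refine ⟨⟨ρ' (eP0 x), hmem⟩, ?_⟩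
    apply Subtype.ext
    show f (eP0.symm (ρ (ρ' (eP0 x)))) = f x
    show f (eP0.symm (eP0 x)) = f x
    rw [LinearEquiv.symm_apply_apply]
  have he1ker : LinearMap.ker e1 = LinearMap.range S.moduleCatToCycles := by
    ext c
    rw [LinearMap.mem_ker, LinearMap.mem_range]
    constructor
    · intro hc
      have hc' : f (eP0.symm (ρ c.1)) = 0 := congrArg Subtype.val hc
      obtain ⟨p, hp⟩ := (huf _).1 hc'
      refine ⟨ρ1 (eP1 p), ?_⟩
      apply Subtype.ext
      show S.f (ρ1 (eP1 p)) = c.1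
      have : ρ (S.f (ρ1 (eP1 p))) = ρ c.1 := by
        show ((eP1 p : Module.Dual R (Module.Dual R P1)).comp u1.dualMap :
          Module.Dual R P0 →ₗ[R] R) = ρ c.1
        refine LinearMap.ext fun ψ => ?_
        show (eP1 p) (u1.dualMap ψ) = (ρ c.1) ψ
        rw [Module.evalEquiv_apply, Module.Dual.eval_apply, LinearMap.dualMap_apply, hp,
          Module.apply_evalEquiv_symm_apply]
      exact ModuleCat.hom_ext this
    · rintro ⟨x₁, rfl⟩
      apply Subtype.ext
      show f (eP0.symm (ρ (S.moduleCatToCycles x₁).1)) = 0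
      have hx : eP0.symm (ρ (S.moduleCatToCycles x₁).1) = u1 (eP1.symm (ρ1inv x₁)) := by
        apply eP0.injective
        rw [LinearEquiv.apply_symm_apply]
        refine LinearMap.ext fun ψ => ?_
        have h1 : (ρ (S.moduleCatToCycles x₁).1) ψ = (ρ1inv x₁) (u1.dualMap ψ) := rfl
        rw [h1, Module.evalEquiv_apply, Module.Dual.eval_apply, ← LinearMap.dualMap_apply u1,
          Module.apply_evalEquiv_symm_apply]
      rw [hx]
      exact huf.apply_apply_eq_zero _
  exact ⟨(homologyEquiv S e1 he1surj he1ker)⟩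

include hf huf in
theorem homology2 :
    Nonempty (((((abC u1 f Q hfu).linearYonedaObj R (ModuleCat.of R R)).sc' 1 2 3).moduleCatLeftHomologyData.H)
      ≃ₗ[R] (Module.Dual R (Module.Dual R M) ⧸ LinearMap.range (Module.Dual.eval R M))) := by
  classical
  set K := (abC u1 f Q hfu).linearYonedaObj R (ModuleCat.of R R) with hK
  set S := K.sc' 1 2 3 with hS
  let eP0 := Module.evalEquiv R P0
  let ρ1 : Module.Dual R (Module.Dual R P0) →ₗ[R] S.X₁ := (ModuleCat.homLinearEquiv
    (M := ModuleCat.of R (Module.Dual R P0)) (N := ModuleCat.of R R) (S := R)).symm.toLinearMap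
  let ρ1inv : S.X₁ →ₗ[R] Module.Dual R (Module.Dual R P0) := (ModuleCat.homLinearEquiv
    (M := ModuleCat.of R (Module.Dual R P0)) (N := ModuleCat.of R R) (S := R)).toLinearMap
  let ρ2 : S.X₂ →ₗ[R] (Q.complex.X 0 →ₗ[R] R) := (ModuleCat.homLinearEquiv
    (M := Q.complex.X 0) (N := ModuleCat.of R R) (S := R)).toLinearMap
  let ρ2' : (Q.complex.X 0 →ₗ[R] R) →ₗ[R] S.X₂ := (ModuleCat.homLinearEquiv
    (M := Q.complex.X 0) (N := ModuleCat.of R R) (S := R)).symm.toLinearMap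
  let T0 : Module.Dual R (Module.Dual R M) →ₗ[R] S.X₂ := ρ2' ∘ₗ LinearMap.lcomp R R (pzero Q)
  have hTmem : ∀ χ : Module.Dual R (Module.Dual R M), T0 χ ∈ LinearMap.ker S.g.hom := by
    intro χ
    rw [LinearMap.mem_ker]
    refine ModuleCat.hom_ext (LinearMap.ext fun a => ?_)
    have h0 : pzero Q (Q.complex.d 1 0 a) = 0 :=
      LinearMap.congr_fun (ModuleCat.hom_ext_iff.1 Q.complex_d_comp_π_f_zero) a
    show χ (pzero Q (Q.complex.d 1 0 a)) = 0
    rw [h0, map_zero]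
  let T : Module.Dual R (Module.Dual R M) →ₗ[R] LinearMap.ker S.g.hom :=
    T0.codRestrict _ hTmem
  have hTinj : Function.Injective T := by
    intro a b hab
    have h := congrArg ρ2 (congrArg Subtype.val hab)
    refine LinearMap.ext fun μ => ?_
    obtain ⟨q, rfl⟩ := pzero_surjective Q μ
    exact LinearMap.congr_fun h q
  have hTsurj : Function.Surjective T := by
    rintro ⟨ψ, hψ⟩
    obtain ⟨χ, hχ⟩ := exists_comp_eq (pzero Q) (pzero_surjective Q)
      (ρ2 ψ : Q.complex.X 0 →ₗ[R] R) (fun a ha => by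
        have hmem : a ∈ LinearMap.range (Q.complex.d 1 0).hom := by
          rw [pzero_d Q]
          exact LinearMap.mem_ker.2 ha
        obtain ⟨b, rfl⟩ := hmem
        exact congrArg (fun g : (abC u1 f Q hfu).X 3 ⟶ ModuleCat.of R R => g.hom b)
          (show S.g.hom ψ = 0 from hψ))
    refine ⟨χ, Subtype.ext ?_⟩
    exact ModuleCat.hom_ext hχ
  let eqT := LinearEquiv.ofBijective T ⟨hTinj, hTsurj⟩
  let e2 : LinearMap.ker S.g.hom →ₗ[R]
      (Module.Dual R (Module.Dual R M) ⧸ LinearMap.range (Module.Dual.eval R M)) :=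
    (LinearMap.range (Module.Dual.eval R M)).mkQ ∘ₗ
      (eqT.symm : LinearMap.ker S.g.hom →ₗ[R] Module.Dual R (Module.Dual R M))
  have he2surj : Function.Surjective e2 :=
    (Submodule.mkQ_surjective _).comp eqT.symm.surjective
  have he2ker : LinearMap.ker e2 = LinearMap.range S.moduleCatToCycles := by
    ext c
    rw [LinearMap.mem_ker, LinearMap.mem_range]
    constructor
    · intro hc
      have hmem : eqT.symm c ∈ LinearMap.range (Module.Dual.eval R M) := by
        have : ((LinearMap.range (Module.Dual.eval R M)).mkQ) (eqT.symm c) = 0 := hc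
        rwa [Submodule.mkQ_apply, Submodule.Quotient.mk_eq_zero] at this
      obtain ⟨m, hm⟩ := hmem
      obtain ⟨x, rfl⟩ := hf m
      have h1 : (c : S.X₂) = T0 (eqT.symm c) :=
        (congrArg Subtype.val (eqT.apply_symm_apply c)).symm
      rw [← hm] at h1
      refine ⟨ρ1 (eP0 x), Subtype.ext ?_⟩
      rw [h1]
      refine ModuleCat.hom_ext (LinearMap.ext fun q => ?_)
      show (eP0 x) (f.dualMap (pzero Q q)) = (Module.Dual.eval R M (f x)) (pzero Q q)
      rw [Module.evalEquiv_apply, Module.Dual.eval_apply, Module.Dual.eval_apply,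
        LinearMap.dualMap_apply]
    · rintro ⟨φ, rfl⟩
      have hsymm : eqT.symm (S.moduleCatToCycles φ) =
          Module.Dual.eval R M (f (eP0.symm (ρ1inv φ))) := by
        rw [LinearEquiv.symm_apply_eq]
        apply Subtype.ext
        refine ModuleCat.hom_ext (LinearMap.ext fun q => ?_)
        show (ρ1inv φ) (f.dualMap (pzero Q q)) =
          (Module.Dual.eval R M (f (eP0.symm (ρ1inv φ)))) (pzero Q q)
        rw [Module.Dual.eval_apply, ← LinearMap.dualMap_apply f,
          Module.apply_evalEquiv_symm_apply]
      show (LinearMap.range (Module.Dual.eval R M)).mkQ (eqT.symm (S.moduleCatToCycles φ)) = 0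
      rw [hsymm, Submodule.mkQ_apply, Submodule.Quotient.mk_eq_zero]
      exact ⟨_, rfl⟩
  exact ⟨homologyEquiv S e2 he2surj he2ker⟩

end Res

end ABAux


/-- The kernel and cokernel of the evaluation map `σ_M : M → M**` are naturally
`Ext¹(D(M), R)` and `Ext²(D(M), R)`. -/
theorem ker_coker_eval_iso_ext_auslander_dual
    (R : Type u) [CommRing R] [IsNoetherianRing R]
    (M P1 P0 : ModuleCat.{u} R) [Module.Finite R M]
    [Module.Finite R P1] [Module.Finite R P0]
    (hP1 : Module.Projective R P1) (hP0 : Module.Projective R P0)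
    (u1 : P1 →ₗ[R] P0) (f : P0 →ₗ[R] M)
    (hf : Function.Surjective f) (huf : Function.Exact u1 f) :
    Nonempty ((LinearMap.ker (Module.Dual.eval R M)) ≃ₗ[R]
      extM R (ModuleCat.of R ((Module.Dual R P1) ⧸ LinearMap.range u1.dualMap))
        (ModuleCat.of R R) 1) ∧
    Nonempty (((Module.Dual R (Module.Dual R M)) ⧸ LinearMap.range (Module.Dual.eval R M)) ≃ₗ[R]
      extM R (ModuleCat.of R ((Module.Dual R P1) ⧸ LinearMap.range u1.dualMap))
        (ModuleCat.of R R) 2) := by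
  haveI : Module.Projective R P1 := hP1
  haveI : Module.Projective R P0 := hP0
  have hfu : f ∘ₗ u1 = 0 := LinearMap.ext fun x => huf.apply_apply_eq_zero x
  let Q : ProjectiveResolution (ModuleCat.of R (Module.Dual R M)) := ProjectiveResolution.of _
  let P : ProjectiveResolution (ABAux.abD u1) := ABAux.abRes u1 f Q hfu hf huf
  set K := (ABAux.abC u1 f Q hfu).linearYonedaObj R (ModuleCat.of R R) with hKdef
  constructor
  · obtain ⟨h1⟩ := ABAux.homology1 u1 f Q hfu hf huf
    exact ⟨h1.symm.trans ((K.sc' 0 1 2).moduleCatHomologyIso.toLinearEquiv.symm.trans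
      ((K.homologyIsoSc' 0 1 2 (by simp) (by simp)).toLinearEquiv.symm.trans
        (P.isoExt 1 (ModuleCat.of R R)).toLinearEquiv.symm))⟩
  · obtain ⟨h2⟩ := ABAux.homology2 u1 f Q hfu hf huf
    exact ⟨h2.symm.trans ((K.sc' 1 2 3).moduleCatHomologyIso.toLinearEquiv.symm.trans
      ((K.homologyIsoSc' 1 2 3 (by simp) (by simp)).toLinearEquiv.symm.trans
        (P.isoExt 2 (ModuleCat.of R R)).toLinearEquiv.symm))⟩
end

section
/- Given a short exact sequence 0 → M' → M → M'' → 0 of finitely generated modules over a commutative Noetherian ring, there exist choices of Auslander duals such that the sequence 0 → (M'')* → M* → (M')* → D(M'') → D(M) → D(M') → 0 is exact. -/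
open CategoryTheory

universe u

variable (R : Type u) [CommRing R]

/-- Factor a linear map through a surjection whose kernel it kills. -/
lemma exists_factor_of_surjective {A B C : Type u}
    [AddCommGroup A] [AddCommGroup B] [AddCommGroup C]
    [Module R A] [Module R B] [Module R C]
    (f : A →ₗ[R] B) (hf : Function.Surjective f)
    (φ : A →ₗ[R] C) (hle : LinearMap.ker f ≤ LinearMap.ker φ) :
    ∃ ψ : B →ₗ[R] C, ψ ∘ₗ f = φ := by
  refine ⟨Submodule.liftQ (LinearMap.ker f) φ hle ∘ₗ
    (f.quotKerEquivOfSurjective hf).symm.toLinearMap, ?_⟩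
  apply LinearMap.ext
  intro a
  have h1 : (f.quotKerEquivOfSurjective hf).symm (f a) = Submodule.Quotient.mk a := by
    rw [LinearEquiv.symm_apply_eq]
    rfl
  show Submodule.liftQ (LinearMap.ker f) φ hle
      ((f.quotKerEquivOfSurjective hf).symm (f a)) = φ a
  rw [h1, Submodule.liftQ_apply]

/-- Given a short exact sequence, for suitable choices of Auslander duals there is an
exact sequence `0 → (M'')* → M* → (M')* → D(M'') → D(M) → D(M') → 0`. -/
theorem auslander_dual_six_term_exact_sequence
    (R : Type u) [CommRing R] [IsNoetherianRing R]
    (M' M M'' : ModuleCat.{u} R)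
    [Module.Finite R M'] [Module.Finite R M] [Module.Finite R M'']
    (i : M' →ₗ[R] M) (p : M →ₗ[R] M'')
    (hi : Function.Injective i) (hp : Function.Surjective p)
    (hip : Function.Exact i p) :
    ∃ (D'' D D' : ModuleCat.{u} R),
      IsAuslanderDual R M'' D'' ∧ IsAuslanderDual R M D ∧ IsAuslanderDual R M' D' ∧
      ∃ (δ : Module.Dual R M' →ₗ[R] D'') (d1 : D'' →ₗ[R] D) (d2 : D →ₗ[R] D'),
        Function.Injective p.dualMap ∧
        Function.Exact p.dualMap i.dualMap ∧
        Function.Exact i.dualMap δ ∧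
        Function.Exact δ d1 ∧
        Function.Exact d1 d2 ∧
        Function.Surjective d2 := by
    classical
  obtain ⟨n1, f', hf'⟩ := Module.Finite.exists_fin' R M'
  obtain ⟨n2, f'', hf''⟩ := Module.Finite.exists_fin' R M''
  obtain ⟨g, hg⟩ := Module.projective_lifting_property p f'' hp
  haveI : Module.Finite R ↥(LinearMap.ker f') :=
    Module.Finite.iff_fg.mpr (IsNoetherian.noetherian _)
  haveI : Module.Finite R ↥(LinearMap.ker f'') :=
    Module.Finite.iff_fg.mpr (IsNoetherian.noetherian _)
  obtain ⟨m1, cov', hcov'⟩ := Module.Finite.exists_fin' R ↥(LinearMap.ker f')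
  obtain ⟨m2, cov'', hcov''⟩ := Module.Finite.exists_fin' R ↥(LinearMap.ker f'')
  set u' : (Fin m1 → R) →ₗ[R] (Fin n1 → R) := (LinearMap.ker f').subtype ∘ₗ cov' with hu'def
  set u'' : (Fin m2 → R) →ₗ[R] (Fin n2 → R) := (LinearMap.ker f'').subtype ∘ₗ cov'' with hu''def
  have hru' : LinearMap.range u' = LinearMap.ker f' := by
    rw [hu'def, LinearMap.range_comp, LinearMap.range_eq_top.mpr hcov', Submodule.map_top,
      Submodule.range_subtype]
  have hru'' : LinearMap.range u'' = LinearMap.ker f'' := by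
    rw [hu''def, LinearMap.range_comp, LinearMap.range_eq_top.mpr hcov'', Submodule.map_top,
      Submodule.range_subtype]
  have hf'u' : ∀ a, f' (u' a) = 0 := by
    intro a
    have h0 : u' a ∈ LinearMap.ker f' := hru' ▸ LinearMap.mem_range_self u' a
    exact h0
  have hf''u'' : ∀ b, f'' (u'' b) = 0 := by
    intro b
    have h0 : u'' b ∈ LinearMap.ker f'' := hru'' ▸ LinearMap.mem_range_self u'' b
    exact h0
  have hpg : ∀ x, p (g x) = f'' x := fun x => LinearMap.congr_fun hg x
  have hmem : ∀ b, -(g (u'' b)) ∈ LinearMap.range i := by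
    intro b
    have h2 : p (g (u'' b)) = 0 := by rw [hpg, hf''u'']
    obtain ⟨y, hy⟩ := (hip _).mp h2
    exact Submodule.neg_mem _ ⟨y, hy⟩
  obtain ⟨h, hh⟩ := Module.projective_lifting_property
    (LinearMap.codRestrict (LinearMap.range i) (i ∘ₗ f') fun a => ⟨f' a, rfl⟩)
    (LinearMap.codRestrict (LinearMap.range i) (-(g ∘ₗ u'')) hmem)
    (by
      rintro ⟨x, m0, rfl⟩
      obtain ⟨a, ha⟩ := hf' m0
      exact ⟨a, Subtype.ext (by show i (f' a) = i m0; rw [ha])⟩)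
  have hkey : ∀ b, i (f' (h b)) = -(g (u'' b)) := by
    intro b
    have h3 := congrArg Subtype.val (LinearMap.congr_fun hh b)
    exact h3
  set f : ((Fin n1 → R) × (Fin n2 → R)) →ₗ[R] M :=
    i ∘ₗ f' ∘ₗ LinearMap.fst R (Fin n1 → R) (Fin n2 → R)
      + g ∘ₗ LinearMap.snd R (Fin n1 → R) (Fin n2 → R) with hfdef
  have hfapp : ∀ x : (Fin n1 → R) × (Fin n2 → R), f x = i (f' x.1) + g x.2 := fun x => rfl
  have hf : Function.Surjective f := by
    intro m
    obtain ⟨b, hb⟩ := hf'' (p m)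
    have hpb : p (m - g b) = 0 := by rw [map_sub, hpg, hb, sub_self]
    obtain ⟨m0, hm0⟩ := (hip _).mp hpb
    obtain ⟨a, ha⟩ := hf' m0
    refine ⟨(a, b), ?_⟩
    show i (f' a) + g b = m
    rw [ha, hm0]
    simp
  set uu : ((Fin m1 → R) × (Fin m2 → R)) →ₗ[R] ((Fin n1 → R) × (Fin n2 → R)) :=
    LinearMap.prod
      (u' ∘ₗ LinearMap.fst R (Fin m1 → R) (Fin m2 → R)
        + h ∘ₗ LinearMap.snd R (Fin m1 → R) (Fin m2 → R))
      (u'' ∘ₗ LinearMap.snd R (Fin m1 → R) (Fin m2 → R)) with huudef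
  have huapp : ∀ y : (Fin m1 → R) × (Fin m2 → R), uu y = (u' y.1 + h y.2, u'' y.2) :=
    fun y => rfl
  have hfu : ∀ y, f (uu y) = 0 := by
    intro y
    show i (f' (u' y.1 + h y.2)) + g (u'' y.2) = 0
    rw [map_add, hf'u', map_add, map_zero, zero_add, hkey, neg_add_cancel]
  have hkerf : LinearMap.ker f = LinearMap.range uu := by
    apply le_antisymm
    · intro x hx
      have hx0 : i (f' x.1) + g x.2 = 0 := hx
      have hp2 : f'' x.2 = 0 := by
        have h4 : p (i (f' x.1)) = 0 := (hip _).mpr ⟨_, rfl⟩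
        have h5 := congrArg p hx0
        rw [map_add, h4, zero_add, hpg, map_zero] at h5
        exact h5
      have hx2 : x.2 ∈ LinearMap.ker f'' := hp2
      rw [← hru''] at hx2
      obtain ⟨b0, hb0⟩ := hx2
      have h5 : f' x.1 = f' (h b0) := by
        apply hi
        have h6 : i (f' x.1) = -(g x.2) := eq_neg_of_add_eq_zero_left hx0
        rw [h6, ← hb0, ← hkey]
      have h7 : x.1 - h b0 ∈ LinearMap.ker f' := by
        rw [LinearMap.mem_ker, map_sub, h5, sub_self]
      rw [← hru'] at h7
      obtain ⟨a0, ha0⟩ := h7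
      refine ⟨(a0, b0), ?_⟩
      show (u' a0 + h b0, u'' b0) = x
      rw [ha0, hb0]
      show (x.1 - h b0 + h b0, x.2) = x
      rw [sub_add_cancel]
    · rintro x ⟨y, rfl⟩
      exact hfu y
  have hex_f : Function.Exact uu f := LinearMap.exact_iff.mpr hkerf
  have hex_f' : Function.Exact u' f' := LinearMap.exact_iff.mpr hru'.symm
  have hex_f'' : Function.Exact u'' f'' := LinearMap.exact_iff.mpr hru''.symm
  set S'' : Submodule R (Module.Dual R (Fin m2 → R)) := LinearMap.range u''.dualMap with hS''
  set S : Submodule R (Module.Dual R ((Fin m1 → R) × (Fin m2 → R))) :=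
    LinearMap.range uu.dualMap with hS
  set S' : Submodule R (Module.Dual R (Fin m1 → R)) := LinearMap.range u'.dualMap with hS'
  set δ : Module.Dual R ↥M' →ₗ[R] (Module.Dual R (Fin m2 → R) ⧸ S'') :=
    S''.mkQ ∘ₗ (f' ∘ₗ h).dualMap with hδdef
  have hδapp : ∀ φ : Module.Dual R ↥M',
      δ φ = Submodule.Quotient.mk (φ ∘ₗ f' ∘ₗ h) := fun φ => rfl
  have hd1le : S'' ≤ LinearMap.ker
      (S.mkQ ∘ₗ (LinearMap.snd R (Fin m1 → R) (Fin m2 → R)).dualMap) := by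
    rintro χ ⟨ψ, rfl⟩
    rw [LinearMap.mem_ker, LinearMap.comp_apply, Submodule.mkQ_apply,
      Submodule.Quotient.mk_eq_zero]
    refine ⟨ψ ∘ₗ LinearMap.snd R (Fin n1 → R) (Fin n2 → R), ?_⟩
    apply LinearMap.ext
    intro y
    rfl
  set d1 : (Module.Dual R (Fin m2 → R) ⧸ S'') →ₗ[R]
      (Module.Dual R ((Fin m1 → R) × (Fin m2 → R)) ⧸ S) :=
    Submodule.liftQ S'' (S.mkQ ∘ₗ (LinearMap.snd R (Fin m1 → R) (Fin m2 → R)).dualMap) hd1le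
    with hd1def
  have hd1app : ∀ χ, d1 (Submodule.Quotient.mk χ) =
      Submodule.Quotient.mk (χ ∘ₗ LinearMap.snd R (Fin m1 → R) (Fin m2 → R)) :=
    fun χ => rfl
  have hd2le : S ≤ LinearMap.ker
      (S'.mkQ ∘ₗ (LinearMap.inl R (Fin m1 → R) (Fin m2 → R)).dualMap) := by
    rintro ρ ⟨σ, rfl⟩
    rw [LinearMap.mem_ker, LinearMap.comp_apply, Submodule.mkQ_apply,
      Submodule.Quotient.mk_eq_zero]
    refine ⟨σ ∘ₗ LinearMap.inl R (Fin n1 → R) (Fin n2 → R), ?_⟩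
    apply LinearMap.ext
    intro a
    show σ (u' a, 0) = σ (uu (a, 0))
    have h10 : uu (a, 0) = (u' a + h 0, u'' 0) := rfl
    rw [h10, map_zero, map_zero, add_zero]
  set d2 : (Module.Dual R ((Fin m1 → R) × (Fin m2 → R)) ⧸ S) →ₗ[R]
      (Module.Dual R (Fin m1 → R) ⧸ S') :=
    Submodule.liftQ S (S'.mkQ ∘ₗ (LinearMap.inl R (Fin m1 → R) (Fin m2 → R)).dualMap) hd2le
    with hd2def
  have hd2app : ∀ ρ, d2 (Submodule.Quotient.mk ρ) =
      Submodule.Quotient.mk (ρ ∘ₗ LinearMap.inl R (Fin m1 → R) (Fin m2 → R)) :=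
    fun ρ => rfl
  -- the six exactness statements
  have c1 : Function.Injective p.dualMap := by
    intro φ ψ hφψ
    apply LinearMap.ext
    intro m''
    obtain ⟨m, rfl⟩ := hp m''
    exact LinearMap.congr_fun hφψ m
  have c2 : Function.Exact p.dualMap i.dualMap := by
    intro φ
    constructor
    · intro h0
      have hle : LinearMap.ker p ≤ LinearMap.ker φ := by
        intro x hx
        obtain ⟨y, rfl⟩ := (hip x).mp hx
        exact LinearMap.congr_fun h0 y
      obtain ⟨ψ, hψ⟩ := exists_factor_of_surjective R p hp φ hle
      refine ⟨ψ, ?_⟩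
      apply LinearMap.ext
      intro m
      exact LinearMap.congr_fun hψ m
    · rintro ⟨ψ, rfl⟩
      apply LinearMap.ext
      intro m'
      show ψ (p (i m')) = 0
      rw [(hip (i m')).mpr ⟨m', rfl⟩, map_zero]
  have c3 : Function.Exact i.dualMap δ := by
    intro φ
    rw [hδapp, Submodule.Quotient.mk_eq_zero]
    constructor
    · intro hmem2
      obtain ⟨τ, hτ⟩ := hmem2
      have hτ' : ∀ b, τ (u'' b) = φ (f' (h b)) := fun b => LinearMap.congr_fun hτ b
      have hle : LinearMap.ker f ≤ LinearMap.ker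
          (φ ∘ₗ f' ∘ₗ LinearMap.fst R (Fin n1 → R) (Fin n2 → R)
            - τ ∘ₗ LinearMap.snd R (Fin n1 → R) (Fin n2 → R)) := by
        intro x hx
        rw [hkerf] at hx
        obtain ⟨y, rfl⟩ := hx
        rw [LinearMap.mem_ker]
        show φ (f' (u' y.1 + h y.2)) - τ (u'' y.2) = 0
        rw [map_add, hf'u', zero_add, hτ' y.2, sub_self]
      obtain ⟨ψ, hψ⟩ := exists_factor_of_surjective R f hf _ hle
      have hψ' : ∀ x : (Fin n1 → R) × (Fin n2 → R), ψ (f x) = φ (f' x.1) - τ x.2 :=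
        fun x => LinearMap.congr_fun hψ x
      refine ⟨ψ, ?_⟩
      apply LinearMap.ext
      intro m0
      obtain ⟨a, rfl⟩ := hf' m0
      show ψ (i (f' a)) = φ (f' a)
      have h8 : i (f' a) = f (a, 0) := by
        show i (f' a) = i (f' a) + g 0
        rw [map_zero, add_zero]
      have h9 : ψ (f (a, 0)) = φ (f' a) - τ 0 := hψ' (a, 0)
      rw [h8, h9, map_zero, sub_zero]
    · rintro ⟨ψ, rfl⟩
      refine ⟨-(ψ ∘ₗ g), ?_⟩
      apply LinearMap.ext
      intro b
      show -(ψ (g (u'' b))) = ψ (i (f' (h b)))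
      rw [hkey, map_neg]
  have c4 : Function.Exact δ d1 := by
    intro y
    obtain ⟨χ, rfl⟩ := Submodule.mkQ_surjective S'' y
    rw [Submodule.mkQ_apply, hd1app, Submodule.Quotient.mk_eq_zero]
    constructor
    · intro hmem3
      obtain ⟨σ, hσ⟩ := hmem3
      have hσ' : ∀ y0 : (Fin m1 → R) × (Fin m2 → R), σ (uu y0) = χ y0.2 :=
        fun y0 => LinearMap.congr_fun hσ y0
      have hle2 : LinearMap.ker f' ≤ LinearMap.ker
          (σ ∘ₗ LinearMap.inl R (Fin n1 → R) (Fin n2 → R)) := by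
        intro a' ha'
        rw [← hru'] at ha'
        obtain ⟨a0, rfl⟩ := ha'
        rw [LinearMap.mem_ker]
        show σ (u' a0, 0) = 0
        have h10 : σ (u' a0 + h 0, u'' 0) = χ (0 : Fin m2 → R) := hσ' (a0, 0)
        rw [map_zero, map_zero, map_zero, add_zero] at h10
        exact h10
      obtain ⟨φ, hφ⟩ := exists_factor_of_surjective R f' hf' _ hle2
      have hφ' : ∀ a', φ (f' a') = σ (a', 0) := fun a' => LinearMap.congr_fun hφ a'
      refine ⟨φ, ?_⟩
      rw [hδapp, Submodule.Quotient.eq]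
      refine ⟨-(σ ∘ₗ LinearMap.inr R (Fin n1 → R) (Fin n2 → R)), ?_⟩
      apply LinearMap.ext
      intro b
      show -(σ (0, u'' b)) = φ (f' (h b)) - χ b
      have h11 : σ (u' 0 + h b, u'' b) = χ b := hσ' (0, b)
      rw [map_zero, zero_add] at h11
      have h13 : σ (h b, u'' b) = σ (h b, 0) + σ (0, u'' b) := by
        rw [← map_add]
        congr 1
        rw [Prod.mk_add_mk, add_zero, zero_add]
      rw [hφ', ← h11, h13]
      abel
    · intro hmem4
      obtain ⟨φ, hφeq⟩ := hmem4
      rw [hδapp, Submodule.Quotient.eq] at hφeq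
      obtain ⟨τ, hτ⟩ := hφeq
      have hτ' : ∀ b, τ (u'' b) = φ (f' (h b)) - χ b := fun b => LinearMap.congr_fun hτ b
      refine ⟨φ ∘ₗ f' ∘ₗ LinearMap.fst R (Fin n1 → R) (Fin n2 → R)
        - τ ∘ₗ LinearMap.snd R (Fin n1 → R) (Fin n2 → R), ?_⟩
      apply LinearMap.ext
      intro y0
      show φ (f' (u' y0.1 + h y0.2)) - τ (u'' y0.2) = χ y0.2
      rw [map_add, hf'u', zero_add, hτ']
      abel
  have c5 : Function.Exact d1 d2 := by
    intro y
    obtain ⟨ρ, rfl⟩ := Submodule.mkQ_surjective S y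
    rw [Submodule.mkQ_apply, hd2app, Submodule.Quotient.mk_eq_zero]
    constructor
    · intro hmem5
      obtain ⟨τ, hτ⟩ := hmem5
      have hτ' : ∀ a, τ (u' a) = ρ (a, 0) := fun a => LinearMap.congr_fun hτ a
      refine ⟨Submodule.Quotient.mk
        (ρ ∘ₗ LinearMap.inr R (Fin m1 → R) (Fin m2 → R) - τ ∘ₗ h), ?_⟩
      rw [hd1app, Submodule.Quotient.eq]
      refine ⟨-(τ ∘ₗ LinearMap.fst R (Fin n1 → R) (Fin n2 → R)), ?_⟩
      apply LinearMap.ext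
      intro y0
      show -(τ (u' y0.1 + h y0.2)) = (ρ (0, y0.2) - τ (h y0.2)) - ρ y0
      have h14 : ρ y0 = ρ (y0.1, 0) + ρ (0, y0.2) := by
        rw [← map_add]
        congr 1
        rw [Prod.mk_add_mk, add_zero, zero_add]
      rw [h14, map_add, hτ']
      abel
    · intro hmem6
      obtain ⟨w, hw⟩ := hmem6
      obtain ⟨χ, rfl⟩ := Submodule.mkQ_surjective S'' w
      rw [Submodule.mkQ_apply, hd1app, Submodule.Quotient.eq] at hw
      obtain ⟨σ, hσ⟩ := hw
      have hσ' : ∀ y0 : (Fin m1 → R) × (Fin m2 → R), σ (uu y0) = χ y0.2 - ρ y0 :=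
        fun y0 => LinearMap.congr_fun hσ y0
      refine ⟨-(σ ∘ₗ LinearMap.inl R (Fin n1 → R) (Fin n2 → R)), ?_⟩
      apply LinearMap.ext
      intro a
      show -(σ (u' a, 0)) = ρ (a, 0)
      have h15 : σ (u' a + h 0, u'' 0) = χ (0 : Fin m2 → R) - ρ (a, 0) := hσ' (a, 0)
      rw [map_zero, map_zero, map_zero, add_zero, zero_sub] at h15
      rw [h15, neg_neg]
  have c6 : Function.Surjective d2 := by
    intro z
    obtain ⟨ρ', rfl⟩ := Submodule.mkQ_surjective S' z
    refine ⟨Submodule.Quotient.mk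
      (ρ' ∘ₗ LinearMap.fst R (Fin m1 → R) (Fin m2 → R)), ?_⟩
    rw [hd2app, Submodule.mkQ_apply]
    congr 1
  exact ⟨ModuleCat.of R (Module.Dual R (Fin m2 → R) ⧸ S''),
    ModuleCat.of R (Module.Dual R ((Fin m1 → R) × (Fin m2 → R)) ⧸ S),
    ModuleCat.of R (Module.Dual R (Fin m1 → R) ⧸ S'),
    ⟨ModuleCat.of R (Fin m2 → R), ModuleCat.of R (Fin n2 → R), u'', f'',
      inferInstanceAs (Module.Finite R (Fin m2 → R)),
      inferInstanceAs (Module.Projective R (Fin m2 → R)),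
      inferInstanceAs (Module.Finite R (Fin n2 → R)),
      inferInstanceAs (Module.Projective R (Fin n2 → R)),
      hf'', hex_f'', ⟨LinearEquiv.refl R _⟩⟩,
    ⟨ModuleCat.of R ((Fin m1 → R) × (Fin m2 → R)),
      ModuleCat.of R ((Fin n1 → R) × (Fin n2 → R)), uu, f,
      inferInstanceAs (Module.Finite R ((Fin m1 → R) × (Fin m2 → R))),
      inferInstanceAs (Module.Projective R ((Fin m1 → R) × (Fin m2 → R))),
      inferInstanceAs (Module.Finite R ((Fin n1 → R) × (Fin n2 → R))),
      inferInstanceAs (Module.Projective R ((Fin n1 → R) × (Fin n2 → R))),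
      hf, hex_f, ⟨LinearEquiv.refl R _⟩⟩,
    ⟨ModuleCat.of R (Fin m1 → R), ModuleCat.of R (Fin n1 → R), u', f',
      inferInstanceAs (Module.Finite R (Fin m1 → R)),
      inferInstanceAs (Module.Projective R (Fin m1 → R)),
      inferInstanceAs (Module.Finite R (Fin n1 → R)),
      inferInstanceAs (Module.Projective R (Fin n1 → R)),
      hf', hex_f', ⟨LinearEquiv.refl R _⟩⟩,
    δ, d1, d2, c1, c2, c3, c4, c5, c6⟩
end

section
/- Over a commutative Noetherian ring R, every k-torsionless finitely generated module is a k-th syzygy; that is, there exists an exact sequence 0 → M → P0 → ⋯ → P_{k−1} with each P_j finitely generated projective. -/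
open CategoryTheory

universe u

variable (R : Type u) [CommRing R]

section Infra

variable {R}

lemma ModuleCat.subsingleton_iff_isZero (M : ModuleCat.{u} R) :
    Subsingleton M ↔ Limits.IsZero M := by
  constructor
  · intro h; exact ModuleCat.isZero_of_subsingleton M
  · intro h
    refine ⟨fun a b => ?_⟩
    have : (𝟙 M : M ⟶ M) = 0 := h.eq_of_src _ _
    calc a = (𝟙 M : M ⟶ M) a := rfl
    _ = (0 : M ⟶ M) a := by rw [this]
    _ = 0 := rfl
    _ = (0 : M ⟶ M) b := rfl
    _ = (𝟙 M : M ⟶ M) b := by rw [this]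
    _ = b := rfl

lemma subsingleton_of_iso {A B : ModuleCat.{u} R} (e : A ≅ B) (h : Subsingleton A) :
    Subsingleton B := by
  rw [ModuleCat.subsingleton_iff_isZero] at h ⊢
  exact h.of_iso e.symm

structure ResData (T : ModuleCat.{u} R) where
  C : ℕ → ModuleCat.{u} R
  projective : ∀ n, Projective (C n)
  d : ∀ n, C (n + 1) ⟶ C n
  ε : C 0 ⟶ T
  surj : Function.Surjective ε
  ex0 : LinearMap.range (d 0).hom = LinearMap.ker ε.hom
  ex : ∀ n, LinearMap.range (d (n + 1)).hom = LinearMap.ker (d n).hom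

namespace ResData

variable {T : ModuleCat.{u} R} (ρ : ResData T)

lemma d_comp_d (n : ℕ) : ρ.d (n + 1) ≫ ρ.d n = 0 := by
  ext x
  have : ρ.d (n + 1) x ∈ LinearMap.range (ρ.d (n + 1)).hom := ⟨x, rfl⟩
  rw [ρ.ex n] at this
  exact this

noncomputable def complex : ChainComplex (ModuleCat.{u} R) ℕ :=
  ChainComplex.of ρ.C ρ.d ρ.d_comp_d

@[simp] lemma complex_X (n : ℕ) : ρ.complex.X n = ρ.C n := rfl

@[simp] lemma complex_d (n : ℕ) : ρ.complex.d (n + 1) n = ρ.d n := by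
  simp [complex, ChainComplex.of]

lemma exactAt_succ (n : ℕ) : ρ.complex.ExactAt (n + 1) := by
  rw [HomologicalComplex.exactAt_iff' _ (n + 2) (n + 1) n (by simp) (by simp)]
  rw [ShortComplex.moduleCat_exact_iff_range_eq_ker]
  dsimp [HomologicalComplex.sc']
  show LinearMap.range (ρ.complex.d (n + 2) (n + 1)).hom = LinearMap.ker (ρ.complex.d (n + 1) n).hom
  rw [ρ.complex_d, ρ.complex_d]
  exact ρ.ex n

lemma d_comp_eps : ρ.complex.d 1 0 ≫ ρ.ε = 0 := by
  rw [ρ.complex_d]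
  ext x
  have : ρ.d 0 x ∈ LinearMap.range (ρ.d 0).hom := ⟨x, rfl⟩
  rw [ρ.ex0] at this
  exact this

noncomputable def toS : ρ.complex ⟶ (ChainComplex.single₀ (ModuleCat.{u} R)).obj T :=
  (ChainComplex.toSingle₀Equiv _ _).symm ⟨ρ.ε, ρ.d_comp_eps⟩

@[simp] lemma toS_f_zero : ρ.toS.f 0 = ρ.ε :=
  ChainComplex.toSingle₀Equiv_symm_apply_f_zero _ _

noncomputable def projectiveResolution : ProjectiveResolution T where
  complex := ρ.complex
  projective := ρ.projective
  π := ρ.toS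
  quasiIso := ⟨fun n => by
    cases n with
    | zero =>
      rw [ChainComplex.quasiIsoAt₀_iff, ShortComplex.quasiIso_iff_of_zeros' _ rfl rfl rfl]
      constructor
      · rw [ShortComplex.moduleCat_exact_iff_range_eq_ker]
        show LinearMap.range (ρ.complex.d 1 0).hom = LinearMap.ker (ρ.toS.f 0).hom
        rw [ρ.complex_d, ρ.toS_f_zero]
        exact ρ.ex0
      · show Epi (ρ.toS.f 0)
        rw [ρ.toS_f_zero]
        exact (ModuleCat.epi_iff_surjective _).2 ρ.surj
    | succ n =>
      rw [quasiIsoAt_iff_exactAt']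
      · exact ρ.exactAt_succ n
      · exact ChainComplex.exactAt_succ_single_obj _ _⟩


noncomputable def extIso (N : ModuleCat.{u} R) (n : ℕ) :
    extM R T N n ≅ (ρ.complex.linearYonedaObj R N).homology n :=
  ρ.projectiveResolution.isoExt n N

lemma subsingleton_ext_iff (N : ModuleCat.{u} R) (n : ℕ) :
    Subsingleton (extM R T N (n + 1)) ↔
      ∀ φ : ρ.C (n + 1) ⟶ N, ρ.d (n + 1) ≫ φ = 0 →
        ∃ ψ : ρ.C n ⟶ N, φ = ρ.d n ≫ ψ := by
  have e := ρ.extIso N (n + 1)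
  have h1 : Subsingleton (extM R T N (n + 1)) ↔
      Subsingleton ((ρ.complex.linearYonedaObj R N).homology (n + 1)) :=
    ⟨subsingleton_of_iso e, subsingleton_of_iso e.symm⟩
  rw [h1, ModuleCat.subsingleton_iff_isZero,
    ← HomologicalComplex.exactAt_iff_isZero_homology,
    HomologicalComplex.exactAt_iff' _ n (n + 1) (n + 2) (by simp) (by simp),
    ShortComplex.moduleCat_exact_iff]
  constructor
  · intro h φ hφ
    obtain ⟨ψ, hψ⟩ := h φ (by
      show (Linear.leftComp R N (ρ.complex.d (n + 2) (n + 1))) φ = 0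
      rw [ρ.complex_d]
      exact hφ)
    exact ⟨ψ, by
      have : (Linear.leftComp R N (ρ.complex.d (n + 1) n)) ψ = φ := hψ
      rw [ρ.complex_d] at this
      exact this.symm⟩
  · intro h φ hφ
    have hφ' : ρ.d (n + 1) ≫ φ = 0 := by
      have : (Linear.leftComp R N (ρ.complex.d (n + 2) (n + 1))) φ = 0 := hφ
      rwa [ρ.complex_d] at this
    obtain ⟨ψ, hψ⟩ := h φ hφ'
    refine ⟨ψ, ?_⟩
    show (Linear.leftComp R N (ρ.complex.d (n + 1) n)) ψ = φ
    rw [ρ.complex_d]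
    exact hψ.symm

end ResData


lemma subsingleton_extM_of_equiv {A B N : ModuleCat.{u} R} (e : ↥A ≃ₗ[R] ↥B) (i : ℕ)
    (h : Subsingleton (extM R A N i)) : Subsingleton (extM R B N i) :=
  subsingleton_of_iso (((Ext R (ModuleCat.{u} R) i).mapIso e.toModuleIso.op.symm).app N) h

lemma range_sub_comp {A : Type u} [AddCommGroup A] [Module R A] (p : Submodule R A)
    {B : Type u} [AddCommGroup B] [Module R B] (g : B →ₗ[R] ↥p) (hg : Function.Surjective g) :
    LinearMap.range (p.subtype ∘ₗ g) = p := by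
  rw [LinearMap.range_comp, LinearMap.range_eq_top.2 hg, Submodule.map_top,
    Submodule.range_subtype]

lemma ker_sub_comp {A : Type u} [AddCommGroup A] [Module R A] (p : Submodule R A)
    {B : Type u} [AddCommGroup B] [Module R B] (g : B →ₗ[R] ↥p) :
    LinearMap.ker (p.subtype ∘ₗ g) = LinearMap.ker g :=
  LinearMap.ker_comp_of_ker_eq_bot _ (Submodule.ker_subtype p)

section Noeth

variable [IsNoetherianRing R]

structure Cov (R : Type u) [CommRing R] where
  A : ModuleCat.{u} R
  n : ℕ
  π : (Fin n → R) →ₗ[R] A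
  surj : Function.Surjective π

noncomputable def freeCov (A : ModuleCat.{u} R) (h : Module.Finite R A) : Cov R :=
  ⟨A, (Module.Finite.exists_fin' R A).choose, (Module.Finite.exists_fin' R A).choose_spec.choose,
    (Module.Finite.exists_fin' R A).choose_spec.choose_spec⟩

lemma finite_ker {A B : Type u} [AddCommGroup A] [Module R A] [AddCommGroup B] [Module R B]
    [Module.Finite R A] (g : A →ₗ[R] B) : Module.Finite R (LinearMap.ker g) :=
  Module.Finite.iff_fg.2 (IsNoetherian.noetherian _)

noncomputable def Cov.next (c : Cov R) : Cov R :=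
  freeCov (ModuleCat.of R (LinearMap.ker c.π)) (finite_ker c.π)

structure Seed (T : ModuleCat.{u} R) where
  C0 : ModuleCat.{u} R
  C1 : ModuleCat.{u} R
  p0 : Projective C0
  p1 : Projective C1
  fin1 : Module.Finite R C1
  d0 : C1 ⟶ C0
  ε : C0 ⟶ T
  surj : Function.Surjective ε
  ex0 : LinearMap.range d0.hom = LinearMap.ker ε.hom

namespace Seed

variable {T : ModuleCat.{u} R} (s : Seed T)

noncomputable def cov0 : Cov R :=
  haveI := s.fin1
  freeCov (ModuleCat.of R (LinearMap.ker s.d0.hom)) (finite_ker s.d0.hom)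

noncomputable def cov (n : ℕ) : Cov R := Nat.rec s.cov0 (fun _ c => c.next) n

lemma cov_succ (i : ℕ) : s.cov (i + 1) = (s.cov i).next := rfl

noncomputable def C : ℕ → ModuleCat.{u} R
  | 0 => s.C0
  | 1 => s.C1
  | (i + 2) => ModuleCat.of R (Fin (s.cov i).n → R)

noncomputable def d : ∀ n : ℕ, s.C (n + 1) ⟶ s.C n
  | 0 => s.d0
  | 1 => ModuleCat.ofHom ((LinearMap.ker s.d0.hom).subtype ∘ₗ (s.cov 0).π)
  | (i + 2) => ModuleCat.ofHom ((LinearMap.ker (s.cov i).π).subtype ∘ₗ (s.cov (i + 1)).π)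

@[simp] lemma d_zero : s.d 0 = s.d0 := rfl
@[simp] lemma d_one : s.d 1 = ModuleCat.ofHom ((LinearMap.ker s.d0.hom).subtype ∘ₗ (s.cov 0).π) := rfl

noncomputable def res : ResData T where
  C := s.C
  projective := by
    intro n
    match n with
    | 0 => exact s.p0
    | 1 => exact s.p1
    | (i + 2) => exact (IsProjective.iff_projective _).mp inferInstance
  d := s.d
  ε := s.ε
  surj := s.surj
  ex0 := s.ex0
  ex := by
    intro n
    match n with
    | 0 =>
        show LinearMap.range ((LinearMap.ker s.d0.hom).subtype ∘ₗ (s.cov 0).π) = LinearMap.ker s.d0.hom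
        exact range_sub_comp _ _ (s.cov 0).surj
    | 1 =>
        show LinearMap.range ((LinearMap.ker (s.cov 0).π).subtype ∘ₗ (s.cov 1).π)
          = LinearMap.ker ((LinearMap.ker s.d0.hom).subtype ∘ₗ (s.cov 0).π)
        exact (range_sub_comp _ _ (s.cov 1).surj).trans (ker_sub_comp _ _).symm
    | (i + 2) =>
        show LinearMap.range ((LinearMap.ker (s.cov (i + 1)).π).subtype ∘ₗ (s.cov (i + 2)).π)
          = LinearMap.ker ((LinearMap.ker (s.cov i).π).subtype ∘ₗ (s.cov (i + 1)).π)
        exact (range_sub_comp _ _ (s.cov (i + 2)).surj).trans (ker_sub_comp _ _).symm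

@[simp] lemma res_C_zero : s.res.C 0 = s.C0 := rfl
@[simp] lemma res_C_one : s.res.C 1 = s.C1 := rfl
@[simp] lemma res_d_zero : s.res.d 0 = s.d0 := rfl

end Seed

end Noeth

end Infra

section MainLemmas

variable {R}

lemma range_dualMap_eq_ker_dualMap {P1 P0 M : Type u} [AddCommGroup P1] [Module R P1]
    [AddCommGroup P0] [Module R P0] [AddCommGroup M] [Module R M]
    (u : P1 →ₗ[R] P0) (f : P0 →ₗ[R] M) (hf : Function.Surjective f)
    (hex : Function.Exact u f) :
    LinearMap.range f.dualMap = LinearMap.ker u.dualMap := by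
  apply le_antisymm
  · rintro _ ⟨φ, rfl⟩
    rw [LinearMap.mem_ker]
    apply LinearMap.ext
    intro x
    show φ (f (u x)) = 0
    rw [(hex (u x)).2 ⟨x, rfl⟩, map_zero]
  · intro φ hφ
    have hφ' := LinearMap.mem_ker.1 hφ
    have hker : LinearMap.ker f ≤ LinearMap.ker φ := by
      intro z hz
      rw [LinearMap.mem_ker] at hz ⊢
      obtain ⟨w, hw⟩ := (hex z).1 hz
      rw [← hw]
      show (u.dualMap φ) w = 0
      rw [hφ']
      rfl
    set e := f.quotKerEquivOfSurjective hf with he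
    have hcomp : ∀ x : P0, e (Submodule.Quotient.mk x) = f x := by
      intro x
      simp [he, LinearMap.quotKerEquivOfSurjective, LinearMap.quotKerEquivRange]
    refine ⟨((LinearMap.ker f).liftQ φ hker) ∘ₗ (e.symm : M →ₗ[R] _), ?_⟩
    apply LinearMap.ext
    intro x
    show ((LinearMap.ker f).liftQ φ hker) (e.symm (f x)) = φ x
    have hx : e.symm (f x) = Submodule.Quotient.mk x := by
      rw [LinearEquiv.symm_apply_eq, hcomp]
    rw [hx, Submodule.liftQ_apply]

end MainLemmas

section MainProof

variable {R} [IsNoetherianRing R]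

theorem main_induction :
    ∀ (k : ℕ) (M : ModuleCat.{u} R) (_ : Module.Finite R M),
      Torsionless R k M → IsSyzygy R k M := by
  intro k
  induction k with
  | zero => intro M _ _; trivial
  | succ k ih =>
    intro M hMfin h
    obtain ⟨D, ⟨P1, P0, u, f, fin1, proj1, fin0, proj0, hfsurj, hexuf, ⟨eD⟩⟩, hExt⟩ := h
    haveI := fin1; haveI := proj1; haveI := fin0; haveI := proj0; haveI := hMfin
    have hrange : LinearMap.range f.dualMap = LinearMap.ker u.dualMap :=
      range_dualMap_eq_ker_dualMap u f hfsurj hexuf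
    set T : ModuleCat.{u} R :=
      ModuleCat.of R (Module.Dual R ↥P1 ⧸ LinearMap.range u.dualMap) with hT
    let seed : Seed T :=
      { C0 := ModuleCat.of R (Module.Dual R ↥P1)
        C1 := ModuleCat.of R (Module.Dual R ↥P0)
        p0 := (IsProjective.iff_projective _).mp inferInstance
        p1 := (IsProjective.iff_projective _).mp inferInstance
        fin1 := inferInstanceAs (Module.Finite R (Module.Dual R ↥P0))
        d0 := ModuleCat.ofHom u.dualMap
        ε := ModuleCat.ofHom (LinearMap.range u.dualMap).mkQ
        surj := Submodule.mkQ_surjective _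
        ex0 := (Submodule.ker_mkQ _).symm }
    set ρ : ResData T := seed.res with hρ
    have hT1 : ∀ i : ℕ, 1 ≤ i → i ≤ k + 1 → Subsingleton (extM R T (ModuleCat.of R R) i) :=
      fun i h1 h2 => subsingleton_extM_of_equiv eD i (hExt i h1 h2)
    -- Step 1 : M is torsionless
    have hM : ∀ m : ↥M, (∀ φ : Module.Dual R ↥M, φ m = 0) → m = 0 := by
      intro m hm
      obtain ⟨x, hx⟩ := hfsurj m
      have h1 : Subsingleton (extM R T (ModuleCat.of R R) (0 + 1)) := hT1 1 le_rfl (by omega)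
      have hcond := (ρ.subsingleton_ext_iff (ModuleCat.of R R) 0).mp h1
      let φx : ρ.C 1 ⟶ ModuleCat.of R R := ModuleCat.ofHom (Module.Dual.eval R ↥P0 x)
      have hφx : ρ.d 1 ≫ φx = 0 := by
        ext y
        have hy : ρ.d 1 y ∈ LinearMap.range f.dualMap := by
          rw [hrange]
          have h2 : ρ.d 1 y ∈ LinearMap.range (ρ.d 1).hom := ⟨y, rfl⟩
          rw [ρ.ex 0] at h2
          exact h2
        obtain ⟨φ₀, hφ₀⟩ := hy
        show φx (ρ.d 1 y) = 0
        rw [← hφ₀]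
        show φ₀ (f x) = 0
        rw [hx]
        exact hm φ₀
      obtain ⟨ψ, hψ⟩ := hcond φx hφx
      obtain ⟨y, hy⟩ := (Module.bijective_dual_eval R ↥P1).2 ψ.hom
      have hxy : ∀ ξ : Module.Dual R ↥P0, ξ x = ξ (u y) := by
        intro ξ
        have h3 := congrArg (fun g => g ξ) hψ
        have h4 : φx ξ = ψ (u.dualMap ξ) := h3
        have h5 : ψ (u.dualMap ξ) = ξ (u y) := by show ψ.hom (u.dualMap ξ) = _; rw [← hy]; rfl
        exact h4.trans h5
      have hz : Module.Dual.eval R ↥P0 (x - u y) = 0 := by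
        apply LinearMap.ext
        intro ξ
        show ξ (x - u y) = 0
        rw [map_sub, hxy ξ, sub_self]
      have hz2 : x - u y = 0 := by
        apply (Module.bijective_dual_eval R ↥P0).1
        rw [hz, map_zero]
      have hxuy : x = u y := by
        have := sub_eq_zero.mp hz2; exact this
      have : f x = 0 := by
        rw [hxuy]
        exact (hexuf (u y)).2 ⟨y, rfl⟩
      rw [← hx, this]
    -- Step 2 : Dual of M is finite, pick a free cover of it
    haveI hfinDualM : Module.Finite R (Module.Dual R ↥M) := by
      have hinj : Function.Injective f.dualMap := f.dualMap_injective_of_surjective hfsurj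
      haveI : Module.Finite R (LinearMap.range f.dualMap) :=
        Module.Finite.iff_fg.2 (IsNoetherian.noetherian _)
      exact Module.Finite.equiv (LinearEquiv.ofInjective f.dualMap hinj).symm
    obtain ⟨nn, s₀, hs₀⟩ := Module.Finite.exists_fin' R (Module.Dual R ↥M)
    set F' : ModuleCat.{u} R := ModuleCat.of R (Module.Dual R (Fin nn → R)) with hF'
    let j : ↥M →ₗ[R] ↥F' := s₀.dualMap ∘ₗ Module.Dual.eval R ↥M
    have hjw : ∀ (m : ↥M) (w : Fin nn → R),
        (s₀.dualMap (Module.Dual.eval R ↥M m)) w = (s₀ w) m :=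
      fun m w => rfl
    have hjinj : Function.Injective j := by
      intro m1 m2 h12
      have h0 : j (m1 - m2) = 0 := by rw [map_sub, h12, sub_self]
      have h0' : s₀.dualMap (Module.Dual.eval R ↥M (m1 - m2)) = 0 := h0
      have := hM (m1 - m2) (fun φ => by
        obtain ⟨w, hw⟩ := hs₀ φ
        rw [← hw, ← hjw, h0']
        rfl)
      exact sub_eq_zero.mp this
    let u' : ↥P0 →ₗ[R] ↥F' := j ∘ₗ f
    set CC : ModuleCat.{u} R := ModuleCat.of R (↥F' ⧸ LinearMap.range j) with hCC
    set D' : ModuleCat.{u} R :=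
      ModuleCat.of R (Module.Dual R ↥P0 ⧸ LinearMap.range u'.dualMap) with hD'
    have hjdsurj : Function.Surjective j.dualMap := by
      intro φ
      obtain ⟨w, hw⟩ := hs₀ φ
      refine ⟨Module.Dual.eval R (Fin nn → R) w, ?_⟩
      apply LinearMap.ext
      intro m
      show (s₀ w) m = φ m
      rw [hw]
    have key : LinearMap.range u'.dualMap = LinearMap.ker u.dualMap := by
      have h1 : u'.dualMap = f.dualMap ∘ₗ j.dualMap :=
        (LinearMap.dualMap_comp_dualMap f j).symm
      rw [h1, LinearMap.range_comp, LinearMap.range_eq_top.2 hjdsurj, Submodule.map_top, hrange]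
    let σ : ResData D' :=
      { C := fun i => ρ.C (i + 1)
        projective := fun i => ρ.projective (i + 1)
        d := fun i => ρ.d (i + 1)
        ε := ModuleCat.ofHom (LinearMap.range u'.dualMap).mkQ
        surj := Submodule.mkQ_surjective _
        ex0 := by
          show LinearMap.range (ρ.d 1).hom = LinearMap.ker (LinearMap.range u'.dualMap).mkQ
          rw [Submodule.ker_mkQ, key, ρ.ex 0]
          rfl
        ex := fun i => ρ.ex (i + 1) }
    have hD'ext : ∀ i : ℕ, 1 ≤ i → i ≤ k → Subsingleton (extM R D' (ModuleCat.of R R) i) := by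
      intro i h1 h2
      obtain ⟨m, rfl⟩ : ∃ m, i = m + 1 := ⟨i - 1, by omega⟩
      have h := hT1 (m + 1 + 1) (by omega) (by omega)
      have hc := (ρ.subsingleton_ext_iff (ModuleCat.of R R) (m + 1)).mp h
      exact (σ.subsingleton_ext_iff (ModuleCat.of R R) m).mpr hc
    haveI hfinF' : Module.Finite R ↥F' :=
      inferInstanceAs (Module.Finite R (Module.Dual R (Fin nn → R)))
    haveI hprojF' : Module.Projective R ↥F' :=
      inferInstanceAs (Module.Projective R (Module.Dual R (Fin nn → R)))
    haveI hfinCC : Module.Finite R ↥CC :=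
      Module.Finite.of_surjective (LinearMap.range j).mkQ (Submodule.mkQ_surjective _)
    have hranger : LinearMap.range u' = LinearMap.range j := by
      show LinearMap.range (j ∘ₗ f) = LinearMap.range j
      rw [LinearMap.range_comp, LinearMap.range_eq_top.2 hfsurj, Submodule.map_top]
    have htor : Torsionless R k CC := by
      refine ⟨D', ⟨P0, F', u', (LinearMap.range j).mkQ, fin0, proj0, hfinF', hprojF',
        Submodule.mkQ_surjective _, ?_, ⟨LinearEquiv.refl R _⟩⟩, hD'ext⟩
      rw [LinearMap.exact_iff, Submodule.ker_mkQ, hranger]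
    exact ⟨F', j, hfinF', hprojF', hjinj, ih CC hfinCC htor⟩

end MainProof


/-- Every `k`-torsionless finitely generated module is a `k`-th syzygy. -/
theorem isSyzygy_of_torsionless
    (R : Type u) [CommRing R] [IsNoetherianRing R]
    (M : ModuleCat.{u} R) [Module.Finite R M] (k : ℕ)
    (h : Torsionless R k M) : IsSyzygy R k M :=
  main_induction k M ‹_› h
end

section
/- Over a commutative Noetherian ring R, if a finitely generated module M is a k-th syzygy, then M satisfies condition S̃_k: depth(M_P) ≥ min{k, depth(R_P)} for all primes P. -/
open CategoryTheory

universe u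

variable (R : Type u) [CommRing R]

namespace SyzygyAux

open CategoryTheory Limits

noncomputable section

variable {A : Type u} [CommRing A]

lemma isZero_iff_subsingleton (M : ModuleCat.{u} A) : IsZero M ↔ Subsingleton M := by
  constructor
  · intro h
    have h0 : (𝟙 M) = 0 := h.eq_of_src _ _
    refine ⟨fun a b => ?_⟩
    have ha : a = (0 : M →ₗ[A] M) a := by rw [show (0 : M →ₗ[A] M) = (𝟙 M : M ⟶ M).hom by rw [h0]; rfl]; rfl
    have hb : b = (0 : M →ₗ[A] M) b := by rw [show (0 : M →ₗ[A] M) = (𝟙 M : M ⟶ M).hom by rw [h0]; rfl]; rfl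
    rw [ha, hb, LinearMap.zero_apply, LinearMap.zero_apply]
  · intro h; exact ModuleCat.isZero_of_subsingleton M

def yMap {X : ModuleCat.{u} A} (π : ProjectiveResolution X) {Y Y' : ModuleCat.{u} A}
    (h : Y ⟶ Y') :
    π.complex.linearYonedaObj A Y ⟶ π.complex.linearYonedaObj A Y' where
  f j := ModuleCat.ofHom
    { toFun := fun φ => φ ≫ h
      map_add' := fun φ ψ => Preadditive.add_comp _ _ _ _ _ _
      map_smul' := fun a φ => Linear.smul_comp _ _ _ _ _ _ }
  comm' := by
    intro i j hij
    ext φ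
    change (π.complex.d j i ≫ (φ ≫ h) : π.complex.X j ⟶ Y') = (π.complex.d j i ≫ φ) ≫ h
    exact (Category.assoc _ _ _).symm

def yT {X : ModuleCat.{u} A} (π : ProjectiveResolution X) (S : ShortComplex (ModuleCat.{u} A)) :
    ShortComplex (CochainComplex (ModuleCat A) ℕ) :=
  ShortComplex.mk (yMap π S.f) (yMap π S.g) (by
    ext j φ
    show ((show π.complex.X j ⟶ S.X₁ from φ) ≫ S.f) ≫ S.g = (0 : _ ⟶ _)
    rw [Category.assoc, S.zero, comp_zero])

lemma yT_shortExact {X : ModuleCat.{u} A} (π : ProjectiveResolution X)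
    (S : ShortComplex (ModuleCat.{u} A)) (hS : S.ShortExact) : (yT π S).ShortExact := by
  have hm := hS.mono_f
  have he := hS.epi_g
  have hproj : ∀ j, Projective (π.complex.X j) := π.projective
  apply HomologicalComplex.shortExact_of_degreewise_shortExact
  intro j
  refine ShortComplex.ShortExact.mk' ?_ ?_ ?_
  · rw [ShortComplex.moduleCat_exact_iff]
    intro φ hφ
    have hφ' : (φ : π.complex.X j ⟶ S.X₂) ≫ S.g = 0 := hφ
    exact ⟨hS.exact.liftFromProjective φ hφ', hS.exact.liftFromProjective_comp φ hφ'⟩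
  · rw [ModuleCat.mono_iff_injective]
    intro φ ψ h
    exact (cancel_mono S.f).1 h
  · rw [ModuleCat.epi_iff_surjective]
    intro φ
    exact ⟨Projective.factorThru φ S.g, Projective.factorThru_comp φ S.g⟩

variable {X : ModuleCat.{u} A}

lemma ext_isZero_of_isZero (π : ProjectiveResolution X) (Y : ModuleCat.{u} A) (hY : IsZero Y)
    (i : ℕ) : IsZero (extM A X Y i) := by
  have hsub : Subsingleton Y := (isZero_iff_subsingleton Y).1 hY
  refine IsZero.of_iso ?_ (π.isoExt i Y)
  rw [← HomologicalComplex.exactAt_iff_isZero_homology, HomologicalComplex.exactAt_iff]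
  apply ShortComplex.exact_of_isZero_X₂
  have hs : Subsingleton (π.complex.X i ⟶ Y) := ⟨fun f g => by ext x; exact Subsingleton.elim _ _⟩
  show IsZero ((π.complex.linearYonedaObj A Y).X i)
  exact (isZero_iff_subsingleton _).2 hs

lemma ext_isZero₂ (π : ProjectiveResolution X) (S : ShortComplex (ModuleCat.{u} A))
    (hS : S.ShortExact) (i : ℕ)
    (h1 : IsZero (extM A X S.X₁ i)) (h3 : IsZero (extM A X S.X₃ i)) :
    IsZero (extM A X S.X₂ i) := by
  have hex := (yT_shortExact π S hS).homology_exact₂ i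
  have z1 : IsZero ((yT π S).X₁.homology i) := IsZero.of_iso h1 (π.isoExt i S.X₁).symm
  have z3 : IsZero ((yT π S).X₃.homology i) := IsZero.of_iso h3 (π.isoExt i S.X₃).symm
  have := hex.isZero_X₂ (z1.eq_of_src _ _) (z3.eq_of_tgt _ _)
  exact IsZero.of_iso this (π.isoExt i S.X₂)

lemma ext_isZero₁_succ (π : ProjectiveResolution X) (S : ShortComplex (ModuleCat.{u} A))
    (hS : S.ShortExact) (i : ℕ)
    (h3 : IsZero (extM A X S.X₃ i)) (h2 : IsZero (extM A X S.X₂ (i + 1))) :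
    IsZero (extM A X S.X₁ (i + 1)) := by
  have hex := (yT_shortExact π S hS).homology_exact₁ i (i + 1) rfl
  have z3 : IsZero ((yT π S).X₃.homology i) := IsZero.of_iso h3 (π.isoExt i S.X₃).symm
  have z2 : IsZero ((yT π S).X₂.homology (i + 1)) := IsZero.of_iso h2 (π.isoExt (i + 1) S.X₂).symm
  have := hex.isZero_X₂ (z3.eq_of_src _ _) (z2.eq_of_tgt _ _)
  exact IsZero.of_iso this (π.isoExt (i + 1) S.X₁)

lemma ext_isZero₁_zero (π : ProjectiveResolution X) (S : ShortComplex (ModuleCat.{u} A))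
    (hS : S.ShortExact)
    (h2 : IsZero (extM A X S.X₂ 0)) : IsZero (extM A X S.X₁ 0) := by
  have hm := hS.mono_f
  have hmono0 : Mono ((yT π S).f.f 0) := by
    rw [ModuleCat.mono_iff_injective]
    intro φ ψ h
    exact (cancel_mono S.f).1 h
  have hcyc : Mono (HomologicalComplex.cyclesMap (yT π S).f 0) := inferInstance
  have hπiso : ∀ (K : CochainComplex (ModuleCat.{u} A) ℕ), IsIso (K.homologyπ 0) := by
    intro K
    apply ShortComplex.isIso_homologyπ
    exact K.shape _ _ (by simp [CochainComplex.prev_nat_zero])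
  have h1 := hπiso ((yT π S).X₁)
  have h2' := hπiso ((yT π S).X₂)
  have hnat := HomologicalComplex.homologyπ_naturality (yT π S).f 0
  have heq : HomologicalComplex.homologyMap (yT π S).f 0 =
      inv ((yT π S).X₁.homologyπ 0) ≫ HomologicalComplex.cyclesMap (yT π S).f 0 ≫
        ((yT π S).X₂.homologyπ 0) := by
    rw [← hnat, IsIso.inv_hom_id_assoc]
  have hmonoH : Mono (HomologicalComplex.homologyMap (yT π S).f 0) := by
    rw [heq]; infer_instance
  have z2 : IsZero ((yT π S).X₂.homology 0) := IsZero.of_iso h2 (π.isoExt 0 S.X₂).symm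
  have := IsZero.of_mono (HomologicalComplex.homologyMap (yT π S).f 0) z2
  exact IsZero.of_iso this (π.isoExt 0 S.X₁)

lemma ext_isZero_of_iso {Y Y' : ModuleCat.{u} A} (e : Y ≅ Y') (i : ℕ)
    (h : IsZero (extM A X Y i)) : IsZero (extM A X Y' i) :=
  IsZero.of_iso h (((Ext A (ModuleCat.{u} A) i).obj (Opposite.op X)).mapIso e).symm

lemma ext_isZero_pi (π : ProjectiveResolution X) (i : ℕ)
    (hz : IsZero (extM A X (ModuleCat.of A A) i)) (n : ℕ) :
    IsZero (extM A X (ModuleCat.of A (Fin n → A)) i) := by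
  induction n with
  | zero =>
    refine ext_isZero_of_isZero π _ ?_ i
    exact (isZero_iff_subsingleton _).2 (by
      show Subsingleton (Fin 0 → A); infer_instance)
  | succ n ih =>
    set f : (ModuleCat.of A A : ModuleCat.{u} A) ⟶ ModuleCat.of A (Fin (n+1) → A) :=
      ModuleCat.ofHom (LinearMap.single A (fun _ : Fin (n+1) => A) 0 : A →ₗ[A] (Fin (n+1) → A)) with hf
    set g : (ModuleCat.of A (Fin (n+1) → A) : ModuleCat.{u} A) ⟶ ModuleCat.of A (Fin n → A) :=
      ModuleCat.ofHom (LinearMap.funLeft A A Fin.succ : (Fin (n+1) → A) →ₗ[A] (Fin n → A)) with hg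
    have hzero : f ≫ g = 0 := by
      ext a
      exact Pi.single_eq_of_ne (M := fun _ : Fin (n+1) => A) (Fin.succ_ne_zero a) 1
    set S : ShortComplex (ModuleCat.{u} A) := ShortComplex.mk f g hzero with hS
    have hSE : S.ShortExact := by
      refine ShortComplex.ShortExact.mk' ?_ ?_ ?_
      · rw [ShortComplex.moduleCat_exact_iff]
        intro φ hφ
        refine ⟨φ 0, ?_⟩
        funext j
        refine Fin.cases ?_ (fun m => ?_) j
        · exact Pi.single_eq_same (M := fun _ : Fin (n+1) => A) 0 (φ 0)
        · have h1 := congrFun hφ m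
          have h2 : φ m.succ = 0 := h1
          have h3 : S.f (φ 0) m.succ = (0 : A) :=
            Pi.single_eq_of_ne (M := fun _ : Fin (n+1) => A) (Fin.succ_ne_zero m) (φ 0)
          rw [h3, h2]
      · rw [ModuleCat.mono_iff_injective]
        intro a b h
        have := congrFun h 0
        exact (Pi.single_eq_same (M := fun _ : Fin (n+1) => A) 0 (a : A)).symm.trans
          (this.trans (Pi.single_eq_same (M := fun _ : Fin (n+1) => A) 0 (b : A)))
      · rw [ModuleCat.epi_iff_surjective]
        intro ψ
        exact ⟨fun j => Fin.cases 0 ψ j, funext fun m => by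
          show (fun j => Fin.cases 0 ψ j) m.succ = ψ m
          simp⟩
    exact ext_isZero₂ π S hSE i hz ih

lemma ext_isZero_of_fin_proj (π : ProjectiveResolution X) (i : ℕ)
    (hz : IsZero (extM A X (ModuleCat.of A A) i)) (P : ModuleCat.{u} A)
    (hfin : Module.Finite A P) (hproj : Module.Projective A P) :
    IsZero (extM A X P i) := by
  obtain ⟨n, s, hs⟩ := Module.Finite.exists_fin' A P
  obtain ⟨σ, hσ⟩ := Module.projective_lifting_property s LinearMap.id hs
  set F := (Ext A (ModuleCat.{u} A) i).obj (Opposite.op X) with hF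
  have hzn : IsZero (F.obj (ModuleCat.of A (Fin n → A))) := ext_isZero_pi π i hz n
  let s' : ModuleCat.of A (Fin n → A) ⟶ P := ModuleCat.ofHom s
  let σ' : P ⟶ ModuleCat.of A (Fin n → A) := ModuleCat.ofHom σ
  have hsplit : σ' ≫ s' = 𝟙 P := ModuleCat.hom_ext hσ
  rw [IsZero.iff_id_eq_zero]
  show 𝟙 (F.obj P) = 0
  rw [← F.map_id, ← hsplit, F.map_comp]
  have : F.map σ' = 0 := hzn.eq_of_tgt _ _
  rw [this, zero_comp]

end

end SyzygyAux

namespace SyzygyAux2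

open CategoryTheory Limits SyzygyAux

section LocalPart

variable (A : Type u) [CommRing A] [IsLocalRing A]

lemma rdepth_lt {N : ModuleCat.{u} A} {i : ℕ} (h : (i : ℕ∞) < rdepth A N) :
    Subsingleton (extM A (ModuleCat.of A (IsLocalRing.ResidueField A)) N i) := by
  by_contra hns
  exact absurd h (not_lt.2 (sInf_le ⟨i, rfl, hns⟩))

lemma local_vanish : ∀ (k i : ℕ) (N : ModuleCat.{u} A), IsSyzygy A k N → i < k →
    ((i : ℕ∞) < rdepth A (ModuleCat.of A A)) →
    IsZero (extM A (ModuleCat.of A (IsLocalRing.ResidueField A)) N i) := by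
  intro k
  induction k with
  | zero => intro i N _ h; omega
  | succ k ih =>
    intro i N hsyz hik hid
    obtain ⟨P, f, finP, projP, injf, hq⟩ := hsyz
    set κ : ModuleCat.{u} A := ModuleCat.of A (IsLocalRing.ResidueField A) with hκ
    obtain ⟨π⟩ : Nonempty (ProjectiveResolution κ) := HasProjectiveResolution.out
    have hzR : IsZero (extM A κ (ModuleCat.of A A) i) :=
      (isZero_iff_subsingleton _).2 (rdepth_lt A hid)
    have hP : IsZero (extM A κ P i) := ext_isZero_of_fin_proj π i hzR P finP projP
    let g : P ⟶ ModuleCat.of A (↑P ⧸ LinearMap.range f) := ModuleCat.ofHom (LinearMap.range f).mkQ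
    have hz0 : (ModuleCat.ofHom f : N ⟶ P) ≫ g = 0 := by
      ext x
      exact (Submodule.Quotient.mk_eq_zero _).2 (LinearMap.mem_range_self f x)
    set S : ShortComplex (ModuleCat.{u} A) := ShortComplex.mk (ModuleCat.ofHom f : N ⟶ P) g hz0 with hSdef
    have hSE : S.ShortExact := by
      refine ShortComplex.ShortExact.mk' ?_ ?_ ?_
      · rw [ShortComplex.moduleCat_exact_iff]
        intro x hx
        exact (Submodule.Quotient.mk_eq_zero _).1 hx
      · rw [ModuleCat.mono_iff_injective]; exact injf
      · rw [ModuleCat.epi_iff_surjective]; exact Submodule.mkQ_surjective _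
    cases i with
    | zero => exact ext_isZero₁_zero π S hSE hP
    | succ j =>
      have hjd : ((j : ℕ) : ℕ∞) < rdepth A (ModuleCat.of A A) :=
        lt_of_le_of_lt (by exact_mod_cast Nat.le_succ j) hid
      have h3 : IsZero (extM A κ S.X₃ j) := ih j _ hq (by omega) hjd
      exact ext_isZero₁_succ π S hSE j h3 hP

end LocalPart

lemma isSyzygy_of_equiv {A : Type u} [CommRing A] :
    ∀ (k : ℕ) (N N' : ModuleCat.{u} A), (↑N ≃ₗ[A] ↑N') → IsSyzygy A k N → IsSyzygy A k N' := by
  intro k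
  induction k with
  | zero => intro N N' _ _; trivial
  | succ k ih =>
    rintro N N' e ⟨P, f, finP, projP, injf, hq⟩
    refine ⟨P, f ∘ₗ (e.symm : ↑N' →ₗ[A] ↑N), finP, projP, ?_, ?_⟩
    · rw [LinearMap.coe_comp]
      exact injf.comp e.symm.injective
    · have hrange : LinearMap.range (f ∘ₗ (e.symm : ↑N' →ₗ[A] ↑N)) = LinearMap.range f := by
        rw [LinearMap.range_comp, LinearEquiv.range, Submodule.map_top]
      exact ih _ _ (Submodule.quotEquivOfEq _ _ hrange.symm) hq

lemma isSyzygy_localized (R : Type u) [CommRing R] (S : Submonoid R) :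
    ∀ (k : ℕ) (M : ModuleCat.{u} R), IsSyzygy R k M →
      IsSyzygy (Localization S) k
        (ModuleCat.of (Localization S) (LocalizedModule S ↑M)) := by
  intro k
  induction k with
  | zero => intro M _; trivial
  | succ k ih =>
    intro M hs
    obtain ⟨P, f, finP, projP, injf, hq⟩ := hs
    haveI := finP; haveI := projP
    set A := Localization S with hA
    let mkM := LocalizedModule.mkLinearMap S ↑M
    let mkP := LocalizedModule.mkLinearMap S ↑P
    let F₀ : LocalizedModule S ↑M →ₗ[R] LocalizedModule S ↑P := IsLocalizedModule.map S mkM mkP f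
    let F : LocalizedModule S ↑M →ₗ[A] LocalizedModule S ↑P :=
      F₀.extendScalarsOfIsLocalization S A
    refine ⟨ModuleCat.of A (LocalizedModule S ↑P), F, ?_, ?_, ?_, ?_⟩
    · show Module.Finite A (LocalizedModule S ↑P)
      exact Module.Finite.of_isLocalizedModule S mkP
    · show Module.Projective A (LocalizedModule S ↑P)
      exact Module.Projective.of_equiv ((IsLocalizedModule.isBaseChange S A mkP).equiv)
    · have hinj : Function.Injective F₀ := IsLocalizedModule.map_injective S mkM mkP f injf
      exact hinj
    · let q := (LinearMap.range f).mkQ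
      let mkQt := LocalizedModule.mkLinearMap S (↑P ⧸ LinearMap.range f)
      let Fq₀ := IsLocalizedModule.map S mkP mkQt q
      let Fq := Fq₀.extendScalarsOfIsLocalization S A
      have hsurj : Function.Surjective Fq :=
        IsLocalizedModule.map_surjective S mkP mkQt q (Submodule.mkQ_surjective _)
      have hexact : Function.Exact F₀ Fq₀ :=
        IsLocalizedModule.map_exact S mkM mkP mkQt f q (LinearMap.exact_map_mkQ_range f)
      have hker : LinearMap.range F = LinearMap.ker Fq := by
        ext x
        simp only [LinearMap.mem_range, LinearMap.mem_ker]
        constructor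
        · rintro ⟨y, rfl⟩
          exact (hexact (F₀ y)).2 ⟨y, rfl⟩
        · intro hx
          exact (hexact x).1 hx
      have e : (LocalizedModule S ↑P ⧸ LinearMap.range F) ≃ₗ[A]
          LocalizedModule S (↑P ⧸ LinearMap.range f) :=
        (Submodule.quotEquivOfEq _ _ hker).trans (Fq.quotKerEquivOfSurjective hsurj)
      exact isSyzygy_of_equiv k _ _ e.symm (ih _ hq)

end SyzygyAux2

/-- A `k`-th syzygy satisfies `S̃_k`: for every prime `P`,
`depth M_P ≥ min {k, depth R_P}`. -/
theorem depth_localization_ge_of_isSyzygy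
    (R : Type u) [CommRing R] [IsNoetherianRing R]
    (M : ModuleCat.{u} R) [Module.Finite R M] (k : ℕ)
    (h : IsSyzygy R k M) :
    ∀ (P : Ideal R) (_ : P.IsPrime),
      min (k : ℕ∞) (rdepth (Localization.AtPrime P)
          (ModuleCat.of (Localization.AtPrime P) (Localization.AtPrime P))) ≤
        rdepth (Localization.AtPrime P)
          (ModuleCat.of (Localization.AtPrime P) (LocalizedModule P.primeCompl M)) := by
  intro P hP
  haveI := hP
  refine le_sInf ?_
  rintro n ⟨i, rfl, hns⟩
  by_contra hlt
  push_neg at hlt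
  rw [lt_min_iff] at hlt
  obtain ⟨h1, h2⟩ := hlt
  have hik : i < k := by exact_mod_cast h1
  have hsyzA := SyzygyAux2.isSyzygy_localized R P.primeCompl k M h
  have hz := SyzygyAux2.local_vanish (Localization.AtPrime P) k i _ hsyzA hik h2
  exact hns ((SyzygyAux.isZero_iff_subsingleton _).1 hz)
end
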